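/- arXiv:2508.06907 — 10 statements merged into one kernel-verified Lean document; each statement's English description precedes it below -/
import Mathlib

section
/- Let P = p₁…pₙ be a permutation containing no square of length 4. Then there exists i ∈ {0,1,2,3} such that for every integer t and all valid indices, p_{i+4t} < p_{i+4t±1} and p_{i+4t+2} > p_{i+4t+2±1}. -/
/-- Two sequences of distinct integers are order-isomorphic:
same length and corresponding pairs compare the same way. -/
def OrdIso (p q : List ℤ) : Prop :=
  p.length = q.length ∧
  ∀ i j : ℕ, i < p.length → j < p.length →
    (p.getD i 0 < p.getD j 0 ↔ q.getD i 0 < q.getD j 0)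

/-- A square is a sequence X₁X₂ with X₁ order-isomorphic to X₂ and |X₁| ≥ 2. -/
def IsSquareL (x : List ℤ) : Prop :=
  ∃ a b : List ℤ, x = a ++ b ∧ 2 ≤ a.length ∧ OrdIso a b

/-- A sequence contains a square if some contiguous factor is a square. -/
def ContainsSquare (p : List ℤ) : Prop :=
  ∃ f : List ℤ, f <:+: p ∧ IsSquareL f

/-- Square-free: no contiguous factor is a square. -/
def SquareFreeL (p : List ℤ) : Prop := ¬ ContainsSquare p

/-- `Q` is an extension of `P` in position `i`:
`Q` has length `|P|+1` and deleting its (i+1)-th symbol gives a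
sequence order-isomorphic to `P`. -/
def ExtL (Q P : List ℤ) (i : ℕ) : Prop :=
  Q.Nodup ∧ Q.length = P.length + 1 ∧ i ≤ P.length ∧ OrdIso (Q.eraseIdx i) P

/-- Condition (S1): with 1-based positions j, positions ≡ i (mod 4) are local
minima and positions ≡ i+2 (mod 4) are local maxima (for all valid indices). -/
def S1Cond (P : List ℤ) (i : ℕ) : Prop :=
  ∀ j : ℕ, 1 ≤ j → j ≤ P.length →
    (j % 4 = i % 4 →
      (2 ≤ j → P.getD (j-1) 0 < P.getD (j-2) 0) ∧
      (j < P.length → P.getD (j-1) 0 < P.getD j 0)) ∧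
    (j % 4 = (i+2) % 4 →
      (2 ≤ j → P.getD (j-2) 0 < P.getD (j-1) 0) ∧
      (j < P.length → P.getD j 0 < P.getD (j-1) 0))

/-- The high-medium-low construction: (S1), (S2) lower < medium < upper
(1-based positions ≡ i mod 4 are lower, ≡ i+2 mod 4 upper, other positions medium),
(S3) the medium-level symbols form a square-free permutation. -/
def HML (P : List ℤ) (i : ℕ) : Prop :=
  i < 4 ∧ S1Cond P i ∧
  (∀ j k : ℕ, 1 ≤ j → j ≤ P.length → 1 ≤ k → k ≤ P.length →
    (j % 4 = i % 4 → k % 2 ≠ i % 2 → P.getD (j-1) 0 < P.getD (k-1) 0) ∧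
    (j % 2 ≠ i % 2 → k % 4 = (i+2) % 4 → P.getD (j-1) 0 < P.getD (k-1) 0)) ∧
  SquareFreeL (((List.range P.length).filter (fun k => (k+1) % 2 != i % 2)).map
    (fun k => P.getD k 0))

lemma isSquare4 (a b c d : ℤ) (hab : a ≠ b) (hcd : c ≠ d) (h : a < b ↔ c < d) :
    IsSquareL [a,b,c,d] := by
  refine ⟨[a,b],[c,d], rfl, by norm_num, by norm_num, ?_⟩
  intro i j hi hj
  simp only [List.length_cons, List.length_nil] at hi hj
  interval_cases i <;> interval_cases j <;>
    simp only [List.getD_cons_zero, List.getD_cons_succ] <;> omega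

lemma s1_helper (P : List ℤ)
    (hne : ∀ a b : ℕ, a < P.length → b < P.length → a ≠ b → P.getD a 0 ≠ P.getD b 0)
    (key : ∀ k : ℕ, k + 3 < P.length →
      (P.getD k 0 < P.getD (k+1) 0 ↔ ¬ (P.getD (k+2) 0 < P.getD (k+3) 0)))
    (U : ℕ → Prop)
    (hU0 : 1 < P.length → (U 0 ↔ P.getD 0 0 < P.getD 1 0))
    (hU1 : 2 < P.length → (U 1 ↔ P.getD 1 0 < P.getD 2 0))
    (hUflip : ∀ m : ℕ, U ((m+2) % 4) ↔ ¬ U (m % 4))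
    (i : ℕ)
    (h0 : U (i % 4)) (h1 : ¬ U ((i+1) % 4)) (h3 : U ((i+3) % 4)) :
    S1Cond P i := by
  have h2 : ¬ U ((i+2) % 4) := fun h => (hUflip i).mp h h0
  have upU : ∀ k : ℕ, k + 1 < P.length → (P.getD k 0 < P.getD (k+1) 0 ↔ U (k % 4)) := by
    intro k
    induction k using Nat.strong_induction_on with
    | _ k ih =>
      intro hk
      match k, ih with
      | 0, _ => simpa using (hU0 hk).symm
      | 1, _ => simpa using (hU1 hk).symm
      | (m+2), ih =>
        have hm := ih m (by omega) (by omega)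
        have hkey := key m (by omega)
        have hflip : P.getD (m+2) 0 < P.getD (m+2+1) 0 ↔ ¬ (P.getD m 0 < P.getD (m+1) 0) := by
          have : m+2+1 = m+3 := rfl
          rw [this]
          constructor
          · exact fun h hm' => (hkey.mp hm') h
          · intro h; by_contra h'; exact h (hkey.mpr h')
        rw [hflip, hm, ← hUflip]
  intro j hj1 hj2
  constructor
  · intro hjm
    constructor
    · intro hj2'
      have hk : (j-2) % 4 = (i+2) % 4 := by omega
      have hup : ¬ (P.getD (j-2) 0 < P.getD (j-2+1) 0) := by
        rw [upU (j-2) (by omega), hk]; exact h2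
      have hne' := hne (j-2+1) (j-2) (by omega) (by omega) (by omega)
      have h12 : j - 2 + 1 = j - 1 := by omega
      rw [h12] at hup hne'
      exact (not_lt.mp hup).lt_of_ne hne'
    · intro hj3
      have hk : (j-1) % 4 = (i+3) % 4 := by omega
      have hup : P.getD (j-1) 0 < P.getD (j-1+1) 0 := by
        rw [upU (j-1) (by omega), hk]; exact h3
      have h11 : j - 1 + 1 = j := by omega
      rwa [h11] at hup
  · intro hjm
    constructor
    · intro hj2'
      have hk : (j-2) % 4 = i % 4 := by omega
      have hup : P.getD (j-2) 0 < P.getD (j-2+1) 0 := by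
        rw [upU (j-2) (by omega), hk]; exact h0
      have h12 : j - 2 + 1 = j - 1 := by omega
      rwa [h12] at hup
    · intro hj3
      have hk : (j-1) % 4 = (i+1) % 4 := by omega
      have hup : ¬ (P.getD (j-1) 0 < P.getD (j-1+1) 0) := by
        rw [upU (j-1) (by omega), hk]; exact h1
      have hne' := hne j (j-1) (by omega) (by omega) (by omega)
      have h11 : j - 1 + 1 = j := by omega
      rw [h11] at hup
      exact (not_lt.mp hup).lt_of_ne hne'

theorem stmt1 (P : List ℤ) (hnd : P.Nodup)
    (h4 : ∀ f : List ℤ, f <:+: P → f.length = 4 → ¬ IsSquareL f) :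
    ∃ i : ℕ, i < 4 ∧ S1Cond P i := by
  have hne : ∀ a b : ℕ, a < P.length → b < P.length → a ≠ b →
      P.getD a 0 ≠ P.getD b 0 := by
    intro a b ha hb hab
    rw [List.getD_eq_getElem _ _ ha, List.getD_eq_getElem _ _ hb]
    intro h
    exact hab (List.Nodup.getElem_inj_iff hnd |>.mp h)
  have key : ∀ k : ℕ, k + 3 < P.length →
      (P.getD k 0 < P.getD (k+1) 0 ↔ ¬ (P.getD (k+2) 0 < P.getD (k+3) 0)) := by
    intro k hk
    have hgd : ∀ m : ℕ, m < 4 → ((P.drop k).take 4).getD m 0 = P.getD (k+m) 0 := by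
      intro m hm
      rw [List.getD_eq_getElem _ _ (by simp; omega), List.getD_eq_getElem _ _ (by omega)]
      rw [List.getElem_take, List.getElem_drop]
    have hinf : (P.drop k).take 4 <:+: P :=
      ((List.take_prefix 4 (P.drop k)).isInfix).trans ((List.drop_suffix k P).isInfix)
    have hlen : ((P.drop k).take 4).length = 4 := by simp; omega
    have hsq := h4 _ hinf hlen
    have hlist : (P.drop k).take 4
        = [P.getD k 0, P.getD (k+1) 0, P.getD (k+2) 0, P.getD (k+3) 0] := by
      apply List.ext_getElem (by simp [hlen])
      intro m hm hm'
      rw [hlen] at hm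
      have := hgd m hm
      rw [List.getD_eq_getElem _ _ (by omega)] at this
      rw [this]
      interval_cases m <;> rfl
    rw [hlist] at hsq
    have h01 : P.getD k 0 ≠ P.getD (k+1) 0 := hne _ _ (by omega) (by omega) (by omega)
    have h23 : P.getD (k+2) 0 ≠ P.getD (k+3) 0 := hne _ _ (by omega) (by omega) (by omega)
    constructor
    · intro h1 h2
      exact hsq (isSquare4 _ _ _ _ h01 h23 (iff_of_true h1 h2))
    · intro h2
      by_contra h1
      exact hsq (isSquare4 _ _ _ _ h01 h23 (iff_of_false h1 h2))
  by_cases hq0 : P.getD 0 0 < P.getD 1 0 <;> by_cases hq1 : P.getD 1 0 < P.getD 2 0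
  · exact ⟨1, by norm_num,
      s1_helper P hne key (fun r => r = 0 ∨ r = 1)
        (fun _ => iff_of_true (Or.inl rfl) hq0)
        (fun _ => iff_of_true (Or.inr rfl) hq1)
        (fun m => by omega) 1 (by omega) (by omega) (by omega)⟩
  · exact ⟨0, by norm_num,
      s1_helper P hne key (fun r => r = 0 ∨ r = 3)
        (fun _ => iff_of_true (Or.inl rfl) hq0)
        (fun _ => iff_of_false (by omega) hq1)
        (fun m => by omega) 0 (by omega) (by omega) (by omega)⟩
  · exact ⟨2, by norm_num,
      s1_helper P hne key (fun r => r = 1 ∨ r = 2)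
        (fun _ => iff_of_false (by omega) hq0)
        (fun _ => iff_of_true (Or.inl rfl) hq1)
        (fun m => by omega) 2 (by omega) (by omega) (by omega)⟩
  · exact ⟨3, by norm_num,
      s1_helper P hne key (fun r => r = 2 ∨ r = 3)
        (fun _ => iff_of_false (by omega) hq0)
        (fun _ => iff_of_false (by omega) hq1)
        (fun m => by omega) 3 (by omega) (by omega) (by omega)⟩
end

section
/- Any permutation constructed by the high-medium-low construction is square-free. That is, if P = p₁…pₙ satisfies: (S1) there is i ∈ {0,1,2,3} such that p_{i+4t} < p_{i+4t±1} and p_{i+4t+2} > p_{i+4t+2±1} for all valid indices (defining lower-level symbols at indices 4t+i, medium-level symbols at indices 4t+i±1, and upper-level symbols at indices 4t+i+2); (S2) every lower-level symbol is less than every medium-level symbol, and every medium-level symbol is less than every upper-level symbol; (S3) the subsequence of medium-level symbols forms a square-free permutation; then P is square-free. -/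
theorem filter_range_eq (e : ℕ) (he : e < 2) : ∀ n : ℕ,
    (List.range n).filter (fun k => (k+1) % 2 != e)
      = (List.range ((n + 1 - e)/2)).map (fun q => e + 2*q) := by
  intro n
  induction n with
  | zero => interval_cases e <;> simp
  | succ n ih =>
    rw [List.range_succ, List.filter_append, ih, List.filter_singleton]
    by_cases hne : n % 2 = e
    · have h1 : ((n+1) % 2 != e) = true := by simp [bne]; omega
      have h2 : (n + 1 + 1 - e)/2 = (n + 1 - e)/2 + 1 := by omega
      have h3 : e + 2*((n + 1 - e)/2) = n := by omega
      rw [h1, h2, List.range_succ, List.map_append]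
      simp only [List.map_cons, List.map_nil, h3, cond_true]
    · have h1 : ((n+1) % 2 != e) = false := by simp [bne]; omega
      have h2 : (n + 1 + 1 - e)/2 = (n + 1 - e)/2 := by omega
      rw [h1, h2]
      simp

theorem asc_pattern (P : List ℤ) (i : ℕ) (hi : i < 4) (hS1 : S1Cond P i)
    (k : ℕ) (hk : k + 1 < P.length) :
    (P.getD k 0 < P.getD (k+1) 0 ↔ (k + 1 + 4 - i) % 4 < 2) := by
  have h1 := hS1 (k+1) (by omega) (by omega)
  have h2 := hS1 (k+2) (by omega) (by omega)
  have hres : (k + 1 + 4 - i) % 4 = 0 ∨ (k + 1 + 4 - i) % 4 = 1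
      ∨ (k + 1 + 4 - i) % 4 = 2 ∨ (k + 1 + 4 - i) % 4 = 3 := by omega
  rcases hres with hr | hr | hr | hr
  · have hc : (k+1) % 4 = i % 4 := by omega
    have := (h1.1 hc).2 hk
    simp only [Nat.add_sub_cancel] at this
    exact ⟨fun _ => by omega, fun _ => by simpa using this⟩
  · have hc : (k+2) % 4 = (i+2) % 4 := by omega
    have h' : P.getD k 0 < P.getD (k+1) 0 := by simpa using (h2.2 hc).1 (by omega)
    exact ⟨fun _ => by omega, fun _ => h'⟩
  · have hc : (k+1) % 4 = (i+2) % 4 := by omega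
    have h' : P.getD (k+1) 0 < P.getD k 0 := by simpa using (h1.2 hc).2 hk
    exact ⟨fun hlt => absurd hlt (lt_asymm h'), fun hh => by omega⟩
  · have hc : (k+2) % 4 = i % 4 := by omega
    have h' : P.getD (k+1) 0 < P.getD k 0 := by simpa using (h2.1 hc).1 (by omega)
    exact ⟨fun hlt => absurd hlt (lt_asymm h'), fun hh => by omega⟩

theorem getD_mid (s l t : List ℤ) (u : ℕ) (hu : u < l.length) :
    (s ++ (l ++ t)).getD (s.length + u) 0 = l.getD u 0 := by
  rw [List.getD_eq_getElem _ _ (by simp; omega), List.getD_eq_getElem _ _ hu]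
  rw [List.getElem_append_right (by omega)]
  rw [List.getElem_append_left (by simpa using hu)]
  congr 1; omega

theorem stmt2 (P : List ℤ) (hnd : P.Nodup) (h : ∃ i : ℕ, HML P i) :
    SquareFreeL P := by
  obtain ⟨i, hi4, hS1, _hS2, hS3⟩ := h
  rintro ⟨f, ⟨s, t, hP⟩, a, b, hf, hm2, ⟨hlab, hiso⟩⟩
  set n := P.length with hn
  set off := s.length with hoff
  set m := a.length with hm
  have hPd : s ++ (a ++ b ++ t) = P := by rw [← hP, hf]; simp
  have hPa : s ++ (a ++ (b ++ t)) = P := by rw [← hPd]; simp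
  have hPb : (s ++ a) ++ (b ++ t) = P := by rw [← hPd]; simp
  have hblen : b.length = m := hlab.symm
  have hnlen : off + 2*m ≤ n := by
    have := congrArg List.length hPd
    simp [hblen] at this
    omega
  -- getD transfers
  have hA : ∀ u, u < m → P.getD (off + u) 0 = a.getD u 0 := by
    intro u hu
    have h1 := getD_mid s a (b ++ t) u hu
    rwa [hPa] at h1
  have hB : ∀ u, u < m → P.getD (off + m + u) 0 = b.getD u 0 := by
    intro u hu
    have h1 := getD_mid (s ++ a) b t u (by omega)
    rw [hPb] at h1
    simp only [List.length_append] at h1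
    convert h1 using 3
  -- block comparisons
  have hcc : ∀ u v, u < m → v < m →
      (P.getD (off + u) 0 < P.getD (off + v) 0 ↔
        P.getD (off + m + u) 0 < P.getD (off + m + v) 0) := by
    intro u v hu hv
    rw [hA u hu, hA v hv, hB u hu, hB v hv]
    exact hiso u v hu hv
  -- ascent pattern
  have hAsc := asc_pattern P i hi4 hS1
  have hmod : ∀ u, u + 1 < m →
      ((off + u + 1 + 4 - i) % 4 < 2 ↔ (off + m + u + 1 + 4 - i) % 4 < 2) := by
    intro u hu
    have h1 := hcc u (u+1) (by omega) (by omega)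
    rw [show off + (u+1) = (off + u) + 1 by omega,
        show off + m + (u+1) = (off + m + u) + 1 by omega] at h1
    rw [hAsc (off + u) (by omega), hAsc (off + m + u) (by omega)] at h1
    exact h1
  -- m is a multiple of 4
  have hm3 : 3 ≤ m := by
    by_contra hc
    have hm2' : m = 2 := by omega
    have := hmod 0 (by omega)
    omega
  have hm4 : m % 4 = 0 := by
    have h0 := hmod 0 (by omega)
    have h1 := hmod 1 (by omega)
    omega
  -- medium subsequence square
  set e := i % 2 with he
  set q0 := (off + 1 - e)/2 with hq0
  set s0 := e + 2*q0 with hs0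
  have hs0off : off ≤ s0 ∧ s0 ≤ off + 1 := by omega
  set L := (n + 1 - e)/2 with hL
  have hq0L : q0 + m ≤ L := by omega
  set g : ℕ → ℤ := fun k => P.getD k 0 with hg
  set M := ((List.range n).filter (fun k => (k+1) % 2 != i % 2)).map g with hM
  have hMeq : M = (List.range L).map (fun q => g (e + 2*q)) := by
    rw [hM, filter_range_eq e (by omega) n, List.map_map]
    rfl
  set A := (List.range (m/2)).map (fun u => g (s0 + 2*u)) with hA2
  set B := (List.range (m/2)).map (fun u => g (s0 + m + 2*u)) with hB2
  have hABeq : A ++ B = (List.range m).map (fun u => g (s0 + 2*u)) := by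
    rw [show m = m/2 + m/2 by omega, List.range_add, List.map_append, List.map_map]
    congr 1
    apply List.map_congr_left
    intro u hu
    simp only [Function.comp_apply]
    congr 1
    omega
  have hABtake : A ++ B = (M.drop q0).take m := by
    rw [hMeq, hABeq]
    apply List.ext_getElem
    · simp
      omega
    · intro u h1 h2
      simp only [List.getElem_map, List.getElem_range, List.getElem_take,
        List.getElem_drop]
      congr 1
      omega
  have hinf : A ++ B <:+: M := by
    rw [hABtake]
    exact ((M.drop q0).take_prefix m).isInfix.trans (M.drop_suffix q0).isInfix
  have hAlen : A.length = m/2 := by simp [hA2]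
  have hBlen : B.length = m/2 := by simp [hB2]
  have hAget : ∀ u, u < m/2 → A.getD u 0 = P.getD (s0 + 2*u) 0 := by
    intro u hu
    rw [List.getD_eq_getElem _ _ (by simp [hA2]; omega)]
    simp [hA2, hg, List.getD]
  have hBget : ∀ u, u < m/2 → B.getD u 0 = P.getD (s0 + m + 2*u) 0 := by
    intro u hu
    rw [List.getD_eq_getElem _ _ (by simp [hB2]; omega)]
    simp [hB2, hg, List.getD]
  have hABiso : OrdIso A B := by
    constructor
    · rw [hAlen, hBlen]
    · intro u v hu hv
      rw [hAlen] at hu hv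
      rw [hAget u hu, hAget v hv, hBget u hu, hBget v hv]
      have h1 := hcc (s0 - off + 2*u) (s0 - off + 2*v) (by omega) (by omega)
      rw [show off + (s0 - off + 2*u) = s0 + 2*u by omega,
          show off + (s0 - off + 2*v) = s0 + 2*v by omega,
          show off + m + (s0 - off + 2*u) = s0 + m + 2*u by omega,
          show off + m + (s0 - off + 2*v) = s0 + m + 2*v by omega] at h1
      exact h1
  exact hS3 ⟨A ++ B, hinf, A, B, rfl, by rw [hAlen]; omega, hABiso⟩
end

section
/- Let m ≥ 1, let A = a₁…aₘ and C = c₁…cₘ be permutations of length m and B = b₁…b_{2m-1} a permutation of length 2m-1, such that every symbol of A is less than every symbol of B, every symbol of B is less than every symbol of C, and B is square-free. Define P = p₁…p_{4m-1} by pᵢ = a_{(i+3)/4} if i ≡ 1 mod 4, pᵢ = c_{(i+1)/4} if i ≡ 3 mod 4, and pᵢ = b_{i/2} if i is even. Then P is square-free. -/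
/-- The interleaving pattern a₁b₁c₁b₂a₂b₃c₂… of length 4m-1 :
with 1-based index i, pᵢ = a_{(i+3)/4} if i ≡ 1 mod 4, pᵢ = c_{(i+1)/4}
if i ≡ 3 mod 4, pᵢ = b_{i/2} if i is even. -/
def interleave (A B C : List ℤ) (m : ℕ) : List ℤ :=
  (List.range (4*m - 1)).map (fun k =>
    if (k+1) % 4 = 1 then A.getD ((k+4)/4 - 1) 0
    else if (k+1) % 4 = 3 then C.getD ((k+2)/4 - 1) 0
    else B.getD ((k+1)/2 - 1) 0)

lemma getD_mem' {l : List ℤ} {i : ℕ} (h : i < l.length) : l.getD i 0 ∈ l := by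
  rw [List.getD_eq_getElem l 0 h]; exact List.getElem_mem h

lemma interleave_len (A B C : List ℤ) (m : ℕ) : (interleave A B C m).length = 4*m-1 := by
  simp [interleave]

lemma interleave_getD (A B C : List ℤ) (m k : ℕ) (hk : k < 4*m-1) :
    (interleave A B C m).getD k 0 =
      if (k+1) % 4 = 1 then A.getD ((k+4)/4 - 1) 0
      else if (k+1) % 4 = 3 then C.getD ((k+2)/4 - 1) 0
      else B.getD ((k+1)/2 - 1) 0 := by
  have hlen : k < (interleave A B C m).length := by rw [interleave_len]; exact hk
  rw [List.getD_eq_getElem _ 0 hlen]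
  simp [interleave]

lemma P_a {A B C : List ℤ} {m k : ℕ} (h4 : k % 4 = 0) (hk : k < 4*m-1) :
    (interleave A B C m).getD k 0 = A.getD (k/4) 0 := by
  rw [interleave_getD A B C m k hk, if_pos (by omega : (k+1) % 4 = 1)]
  congr 1; omega

lemma P_c {A B C : List ℤ} {m k : ℕ} (h4 : k % 4 = 2) (hk : k < 4*m-1) :
    (interleave A B C m).getD k 0 = C.getD (k/4) 0 := by
  rw [interleave_getD A B C m k hk, if_neg (by omega : ¬ (k+1) % 4 = 1),
    if_pos (by omega : (k+1) % 4 = 3)]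
  congr 1; omega

lemma P_b {A B C : List ℤ} {m k : ℕ} (h2 : k % 2 = 1) (hk : k < 4*m-1) :
    (interleave A B C m).getD k 0 = B.getD (k/2) 0 := by
  rw [interleave_getD A B C m k hk, if_neg (by omega : ¬ (k+1) % 4 = 1),
    if_neg (by omega : ¬ (k+1) % 4 = 3)]
  congr 1; omega

lemma updown (m : ℕ) (hm : 1 ≤ m) (A B C : List ℤ)
    (hA : A.length = m) (hB : B.length = 2*m - 1) (hC : C.length = m)
    (hAB : ∀ a ∈ A, ∀ b ∈ B, a < b) (hBC : ∀ b ∈ B, ∀ c ∈ C, b < c)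
    (k : ℕ) (hk : k + 1 < 4*m-1) :
    ((interleave A B C m).getD k 0 < (interleave A B C m).getD (k+1) 0) ↔
      (k % 4 = 0 ∨ k % 4 = 1) := by
  have hk' : k < 4*m-1 := by omega
  rcases (show k%4=0 ∨ k%4=1 ∨ k%4=2 ∨ k%4=3 by omega) with h|h|h|h
  · rw [P_a h hk', P_b (by omega) hk]
    exact iff_of_true
      (hAB _ (getD_mem' (by omega)) _ (getD_mem' (by omega))) (Or.inl h)
  · rw [P_b (by omega) hk', P_c (by omega) hk]
    exact iff_of_true
      (hBC _ (getD_mem' (by omega)) _ (getD_mem' (by omega))) (Or.inr h)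
  · rw [P_c h hk', P_b (by omega) hk]
    exact iff_of_false
      (lt_asymm (hBC _ (getD_mem' (by omega)) _ (getD_mem' (by omega)))) (by omega)
  · rw [P_b (by omega) hk', P_a (by omega) hk]
    exact iff_of_false
      (lt_asymm (hAB _ (getD_mem' (by omega)) _ (getD_mem' (by omega)))) (by omega)
theorem stmt3 (m : ℕ) (hm : 1 ≤ m) (A B C : List ℤ)
    (hA : A.length = m) (hB : B.length = 2*m - 1) (hC : C.length = m)
    (hAn : A.Nodup) (hBn : B.Nodup) (hCn : C.Nodup)
    (hAB : ∀ a ∈ A, ∀ b ∈ B, a < b) (hBC : ∀ b ∈ B, ∀ c ∈ C, b < c)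
    (hBsf : SquareFreeL B) :
    SquareFreeL (interleave A B C m) := by
  rintro ⟨f, ⟨pre, suf, hP⟩, X₁, X₂, hfeq, hlen2, hiso⟩
  set P := interleave A B C m with hPdef
  have hPlen : P.length = 4*m-1 := interleave_len A B C m
  set s := pre.length with hs
  set L := X₁.length with hL
  have hLX2 : X₂.length = L := hiso.1.symm
  have hflen : f.length = 2*L := by
    rw [hfeq, List.length_append, hLX2]; omega
  have hsL : s + 2*L ≤ 4*m-1 := by
    have h := congrArg List.length hP
    simp only [List.length_append] at h
    omega
  have hacc : ∀ d, d < 2*L → P.getD (s+d) 0 = f.getD d 0 := by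
    intro d hd
    rw [← hP, List.append_assoc, List.getD_append_right _ _ _ _ (by omega),
        Nat.add_sub_cancel_left]
    exact List.getD_append _ _ _ _ (by omega)
  have hiso' : ∀ i j, i < L → j < L →
      (P.getD (s+i) 0 < P.getD (s+j) 0 ↔ P.getD (s+L+i) 0 < P.getD (s+L+j) 0) := by
    intro i j hi hj
    have h := hiso.2 i j hi hj
    have e1 : ∀ d, d < L → P.getD (s+d) 0 = X₁.getD d 0 := by
      intro d hd
      rw [hacc d (by omega), hfeq]
      exact List.getD_append _ _ _ _ (by omega)
    have e2 : ∀ d, d < L → P.getD (s+L+d) 0 = X₂.getD d 0 := by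
      intro d hd
      rw [show s+L+d = s+(L+d) by omega, hacc (L+d) (by omega), hfeq,
          List.getD_append_right _ _ _ _ (by omega), Nat.add_sub_cancel_left]
    rw [e1 i hi, e1 j hj, e2 i hi, e2 j hj]; exact h
  have hup : ∀ k, k+1 < 4*m-1 →
      (P.getD k 0 < P.getD (k+1) 0 ↔ (k%4=0 ∨ k%4=1)) :=
    updown m hm A B C hA hB hC hAB hBC
  have hL2 : 2 ≤ L := hlen2
  have hodd : L % 4 = 1 ∨ L % 4 = 3 → False := by
    intro h4
    have h0 := hiso' 0 1 (by omega) (by omega)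
    simp only [Nat.add_zero] at h0
    rw [hup s (by omega), hup (s+L) (by omega)] at h0
    have h1 := hiso' 1 2 (by omega) (by omega)
    rw [show s+2 = (s+1)+1 by omega, show s+L+2 = (s+L+1)+1 by omega] at h1
    rw [hup (s+1) (by omega), hup (s+L+1) (by omega)] at h1
    omega
  have htwo : L % 4 = 2 → False := by
    intro h4
    have h0 := hiso' 0 1 (by omega) (by omega)
    simp only [Nat.add_zero] at h0
    rw [hup s (by omega), hup (s+L) (by omega)] at h0
    omega
  have h4 : L % 4 = 0 := by
    rcases (show L % 4 = 0 ∨ L % 4 = 1 ∨ L % 4 = 2 ∨ L % 4 = 3 by omega) with h|h|h|h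
    · exact h
    · exact absurd (hodd (Or.inl h)) (by simp)
    · exact absurd (htwo h) (by simp)
    · exact absurd (hodd (Or.inr h)) (by simp)
  -- even case: extract a square in B
  have hL4 : 4 ≤ L := by omega
  set j₀ := s/2 with hj0
  set half := L/2 with hhalf
  have hjB : j₀ + 2*half ≤ B.length := by omega
  have hlen₁ : ((B.drop j₀).take half).length = half := by
    rw [List.length_take, List.length_drop]; omega
  have hlen₂ : ((B.drop (j₀+half)).take half).length = half := by
    rw [List.length_take, List.length_drop]; omega
  have hPB : ∀ t, 2*t+1 < 4*m-1 → P.getD (2*t+1) 0 = B.getD t 0 := by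
    intro t ht
    rw [P_b (by omega) ht]; congr 1; omega
  have gtd : ∀ (a i : ℕ), i < half → a + half ≤ B.length →
      ((B.drop a).take half).getD i 0 = B.getD (a+i) 0 := by
    intro a i hi ha
    rw [List.getD_eq_getElem _ 0 (by rw [List.length_take, List.length_drop]; omega),
        List.getD_eq_getElem _ 0 (by omega)]
    simp [List.getElem_take, List.getElem_drop]
  apply hBsf
  refine ⟨(B.drop j₀).take (2*half),
    ((List.take_prefix _ _).isInfix).trans (List.drop_suffix j₀ B).isInfix,
    (B.drop j₀).take half, (B.drop (j₀+half)).take half, ?_, ?_, ?_, ?_⟩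
  · rw [two_mul, List.take_add, List.drop_drop]
  · rw [hlen₁]; omega
  · rw [hlen₁, hlen₂]
  · intro i j hi hj
    rw [hlen₁] at hi hj
    rw [gtd j₀ i hi (by omega), gtd j₀ j hj (by omega),
        gtd (j₀+half) i hi (by omega), gtd (j₀+half) j hj (by omega)]
    have h := hiso' (2*(j₀+i)+1-s) (2*(j₀+j)+1-s) (by omega) (by omega)
    rw [show s + (2*(j₀+i)+1-s) = 2*(j₀+i)+1 by omega,
        show s + (2*(j₀+j)+1-s) = 2*(j₀+j)+1 by omega,
        show s + L + (2*(j₀+i)+1-s) = 2*(j₀+half+i)+1 by omega,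
        show s + L + (2*(j₀+j)+1-s) = 2*(j₀+half+j)+1 by omega,
        hPB (j₀+i) (by omega), hPB (j₀+j) (by omega),
        hPB (j₀+half+i) (by omega), hPB (j₀+half+j) (by omega)] at h
    exact h
end

section
/- Let P be a permutation constructed by the high-medium-low construction (satisfying conditions (S1)-(S3)). Then no contiguous factor of P of length 4 is order-isomorphic to any of the permutations 2341, 3214, 4123, or 1432. -/
lemma ord_lt {f q : List ℤ} (h : OrdIso f q) {u v : ℕ}
    (hu : u < f.length) (hv : v < f.length)
    (hq : q.getD u 0 < q.getD v 0) : f.getD u 0 < f.getD v 0 :=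
  (h.2 u v hu hv).mpr hq

theorem stmt5 (P : List ℤ) (hnd : P.Nodup) (i : ℕ) (h : HML P i) :
    ∀ f : List ℤ, f <:+: P → f.length = 4 →
      ¬ OrdIso f [2, 3, 4, 1] ∧ ¬ OrdIso f [3, 2, 1, 4] ∧
      ¬ OrdIso f [4, 1, 2, 3] ∧ ¬ OrdIso f [1, 4, 3, 2] := by
  obtain ⟨hi4, hS1, hS2, -⟩ := h
  intro f hf hf4
  obtain ⟨s, t, hP⟩ := hf
  set a := s.length with ha
  have hlen : P.length = a + 4 + t.length := by
    rw [← hP]; simp [hf4]; omega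
  have hget : ∀ m, m < 4 → P.getD (a + m) 0 = f.getD m 0 := by
    intro m hm
    rw [← hP, List.append_assoc, List.getD_append_right _ _ _ _ (by omega),
      Nat.add_sub_cancel_left, List.getD_append _ _ _ _ (by omega)]
  set p0 := f.getD 0 0 with hp0
  set p1 := f.getD 1 0 with hp1
  set p2 := f.getD 2 0 with hp2
  set p3 := f.getD 3 0 with hp3
  have e0 : P.getD a 0 = p0 := by
    have := hget 0 (by norm_num); rwa [show a + 0 = a from rfl] at this
  have e1 : P.getD (a+1) 0 = p1 := hget 1 (by norm_num)
  have e2 : P.getD (a+2) 0 = p2 := hget 2 (by norm_num)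
  have e3 : P.getD (a+3) 0 = p3 := hget 3 (by norm_num)
  have key : (p0 < p1 ∧ p1 < p2 ∧ p3 < p2 ∧ p0 < p3) ∨
      (p1 < p0 ∧ p1 < p2 ∧ p2 < p3 ∧ p0 < p3) ∨
      (p1 < p0 ∧ p2 < p1 ∧ p2 < p3 ∧ p3 < p0) ∨
      (p0 < p1 ∧ p2 < p1 ∧ p3 < p2 ∧ p3 < p0) := by
    have hcase : (a+1) % 4 = i % 4 ∨ (a+2) % 4 = i % 4 ∨
        (a+3) % 4 = i % 4 ∨ (a+4) % 4 = i % 4 := by omega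
    rcases hcase with hc | hc | hc | hc
    · left
      have hmin := (hS1 (a+1) (by omega) (by omega)).1 hc
      have hmax := (hS1 (a+3) (by omega) (by omega)).2 (by omega)
      have i1 := hmin.2 (by omega)
      have i2 := hmax.1 (by omega)
      have i3 := hmax.2 (by omega)
      have i4 := (hS2 (a+1) (a+4) (by omega) (by omega) (by omega) (by omega)).1
        hc (by omega)
      simp only [show a+1-1=a from by omega, show a+2-1=a+1 from by omega,
        show a+3-1=a+2 from by omega, show a+4-1=a+3 from by omega,
        show a+2-2=a from by omega, show a+3-2=a+1 from by omega,
        show a+4-2=a+2 from by omega, e0, e1, e2, e3] at i1 i2 i3 i4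
      exact ⟨i1, i2, i3, i4⟩
    · right; left
      have hmin := (hS1 (a+2) (by omega) (by omega)).1 hc
      have hmax := (hS1 (a+4) (by omega) (by omega)).2 (by omega)
      have i1 := hmin.1 (by omega)
      have i2 := hmin.2 (by omega)
      have i3 := hmax.1 (by omega)
      have i4 := (hS2 (a+1) (a+4) (by omega) (by omega) (by omega) (by omega)).2
        (by omega) (by omega)
      simp only [show a+1-1=a from by omega, show a+2-1=a+1 from by omega,
        show a+3-1=a+2 from by omega, show a+4-1=a+3 from by omega,
        show a+2-2=a from by omega, show a+3-2=a+1 from by omega,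
        show a+4-2=a+2 from by omega, e0, e1, e2, e3] at i1 i2 i3 i4
      exact ⟨i1, i2, i3, i4⟩
    · right; right; left
      have hmin := (hS1 (a+3) (by omega) (by omega)).1 hc
      have hmax := (hS1 (a+1) (by omega) (by omega)).2 (by omega)
      have i1 := hmax.2 (by omega)
      have i2 := hmin.1 (by omega)
      have i3 := hmin.2 (by omega)
      have i4 := (hS2 (a+4) (a+1) (by omega) (by omega) (by omega) (by omega)).2
        (by omega) (by omega)
      simp only [show a+1-1=a from by omega, show a+2-1=a+1 from by omega,
        show a+3-1=a+2 from by omega, show a+4-1=a+3 from by omega,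
        show a+2-2=a from by omega, show a+3-2=a+1 from by omega,
        show a+4-2=a+2 from by omega, e0, e1, e2, e3] at i1 i2 i3 i4
      exact ⟨i1, i2, i3, i4⟩
    · right; right; right
      have hmin := (hS1 (a+4) (by omega) (by omega)).1 hc
      have hmax := (hS1 (a+2) (by omega) (by omega)).2 (by omega)
      have i1 := hmax.1 (by omega)
      have i2 := hmax.2 (by omega)
      have i3 := hmin.1 (by omega)
      have i4 := (hS2 (a+4) (a+1) (by omega) (by omega) (by omega) (by omega)).1
        hc (by omega)
      simp only [show a+1-1=a from by omega, show a+2-1=a+1 from by omega,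
        show a+3-1=a+2 from by omega, show a+4-1=a+3 from by omega,
        show a+2-2=a from by omega, show a+3-2=a+1 from by omega,
        show a+4-2=a+2 from by omega, e0, e1, e2, e3] at i1 i2 i3 i4
      exact ⟨i1, i2, i3, i4⟩
  have hu : ∀ m : ℕ, m < 4 → m < f.length := by omega
  refine ⟨fun hiso => ?_, fun hiso => ?_, fun hiso => ?_, fun hiso => ?_⟩
  · -- 2341 : p0<p1<p2, p3<p0
    have a1 : p0 < p1 := ord_lt hiso (hu 0 (by norm_num)) (hu 1 (by norm_num)) (by norm_num)
    have a2 : p1 < p2 := ord_lt hiso (hu 1 (by norm_num)) (hu 2 (by norm_num)) (by norm_num)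
    have a3 : p3 < p0 := ord_lt hiso (hu 3 (by norm_num)) (hu 0 (by norm_num)) (by norm_num)
    rcases key with ⟨k1,k2,k3,k4⟩|⟨k1,k2,k3,k4⟩|⟨k1,k2,k3,k4⟩|⟨k1,k2,k3,k4⟩ <;> linarith
  · -- 3214 : p2<p1<p0<p3
    have a1 : p1 < p0 := ord_lt hiso (hu 1 (by norm_num)) (hu 0 (by norm_num)) (by norm_num)
    have a2 : p2 < p1 := ord_lt hiso (hu 2 (by norm_num)) (hu 1 (by norm_num)) (by norm_num)
    have a3 : p0 < p3 := ord_lt hiso (hu 0 (by norm_num)) (hu 3 (by norm_num)) (by norm_num)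
    rcases key with ⟨k1,k2,k3,k4⟩|⟨k1,k2,k3,k4⟩|⟨k1,k2,k3,k4⟩|⟨k1,k2,k3,k4⟩ <;> linarith
  · -- 4123 : p1<p2<p3<p0
    have a1 : p1 < p2 := ord_lt hiso (hu 1 (by norm_num)) (hu 2 (by norm_num)) (by norm_num)
    have a2 : p2 < p3 := ord_lt hiso (hu 2 (by norm_num)) (hu 3 (by norm_num)) (by norm_num)
    have a3 : p3 < p0 := ord_lt hiso (hu 3 (by norm_num)) (hu 0 (by norm_num)) (by norm_num)
    rcases key with ⟨k1,k2,k3,k4⟩|⟨k1,k2,k3,k4⟩|⟨k1,k2,k3,k4⟩|⟨k1,k2,k3,k4⟩ <;> linarith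
  · -- 1432 : p0<p3<p2<p1
    have a1 : p0 < p3 := ord_lt hiso (hu 0 (by norm_num)) (hu 3 (by norm_num)) (by norm_num)
    have a2 : p3 < p2 := ord_lt hiso (hu 3 (by norm_num)) (hu 2 (by norm_num)) (by norm_num)
    have a3 : p2 < p1 := ord_lt hiso (hu 2 (by norm_num)) (hu 1 (by norm_num)) (by norm_num)
    rcases key with ⟨k1,k2,k3,k4⟩|⟨k1,k2,k3,k4⟩|⟨k1,k2,k3,k4⟩|⟨k1,k2,k3,k4⟩ <;> linarith
end

section
/- Let P₁ be a permutation constructed by Construction 1 (the high-medium-low construction with pattern a₁b₁c₁b₂a₂b₃c₂… of length 4m-1, where all symbols of A are below those of B, which are below those of C, and B is square-free). Let x and y be integers with x > a > y for every symbol a of P₁. Then the permutation x P₁ y is square-free. -/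
lemma getD_mid_s6 (u v w : List ℤ) (i : ℕ) (h : i < v.length) :
    (u ++ v ++ w).getD (u.length + i) 0 = v.getD i 0 := by
  rw [List.getD_eq_getElem _ _ (by simp; omega), List.getD_eq_getElem _ _ h]
  rw [List.getElem_append_left (by simp; omega)]
  rw [List.getElem_append_right (by omega)]
  congr 1; omega

theorem stmt6 (m : ℕ) (hm : 1 ≤ m) (A B C : List ℤ)
    (hA : A.length = m) (hB : B.length = 2*m - 1) (hC : C.length = m)
    (hAn : A.Nodup) (hBn : B.Nodup) (hCn : C.Nodup)
    (hAB : ∀ a ∈ A, ∀ b ∈ B, a < b) (hBC : ∀ b ∈ B, ∀ c ∈ C, b < c)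
    (hBsf : SquareFreeL B)
    (x y : ℤ) (hxy : ∀ a ∈ interleave A B C m, y < a ∧ a < x) :
    SquareFreeL (x :: interleave A B C m ++ [y]) := by
  set Q := x :: interleave A B C m ++ [y] with hQdef
  have hPlen : (interleave A B C m).length = 4*m-1 := by simp [interleave]
  have hPget : ∀ k, k < 4*m-1 → (interleave A B C m).getD k 0 =
      (if (k+1) % 4 = 1 then A.getD ((k+4)/4 - 1) 0
       else if (k+1) % 4 = 3 then C.getD ((k+2)/4 - 1) 0
       else B.getD ((k+1)/2 - 1) 0) := by
    intro k hk
    rw [List.getD_eq_getElem _ _ (by simpa [interleave] using hk)]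
    simp [interleave]
  have gmid : ∀ i : ℕ, 1 ≤ i → i ≤ 4*m-1 → Q.getD i 0 = (interleave A B C m).getD (i-1) 0 := by
    intro i h1 h2
    obtain ⟨i', rfl⟩ : ∃ i', i = i'+1 := ⟨i-1, by omega⟩
    have hq3 : Q = x :: (interleave A B C m ++ [y]) := by simp [hQdef]
    rw [hq3, List.getD_cons_succ]
    rw [List.getD_eq_getElem _ _ (by simp [hPlen]; omega),
        List.getD_eq_getElem _ _ (by omega)]
    rw [List.getElem_append_left (by omega)]
    congr 1
  have g0 : Q.getD 0 0 = x := by simp [hQdef]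
  have gy : Q.getD (4*m) 0 = y := by
    rw [hQdef, List.getD_eq_getElem _ _ (by simp [hPlen]; omega)]
    rw [List.getElem_append_right (by simp [hPlen]; omega)]
    simp [hPlen]
  have memA : ∀ i, i % 4 = 1 → i ≤ 4*m-1 → Q.getD i 0 ∈ A := by
    intro i h1 h2
    rw [gmid i (by omega) h2, hPget (i-1) (by omega), if_pos (by omega)]
    rw [List.getD_eq_getElem _ _ (by rw [hA]; omega)]
    exact List.getElem_mem _
  have memC : ∀ i, i % 4 = 3 → i ≤ 4*m-1 → Q.getD i 0 ∈ C := by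
    intro i h1 h2
    rw [gmid i (by omega) h2, hPget (i-1) (by omega), if_neg (by omega), if_pos (by omega)]
    rw [List.getD_eq_getElem _ _ (by rw [hC]; omega)]
    exact List.getElem_mem _
  have gBeq : ∀ i, i % 2 = 0 → 1 ≤ i → i ≤ 4*m-1 → Q.getD i 0 = B.getD (i/2 - 1) 0 := by
    intro i h1 h2 h3
    rw [gmid i h2 h3, hPget (i-1) (by omega), if_neg (by omega), if_neg (by omega)]
    congr 1; omega
  have memB : ∀ i, i % 2 = 0 → 1 ≤ i → i ≤ 4*m-1 → Q.getD i 0 ∈ B := by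
    intro i h1 h2 h3
    rw [gBeq i h1 h2 h3, List.getD_eq_getElem _ _ (by rw [hB]; omega)]
    exact List.getElem_mem _
  have memP : ∀ i, 1 ≤ i → i ≤ 4*m-1 → Q.getD i 0 ∈ interleave A B C m := by
    intro i h1 h2
    rw [gmid i h1 h2, List.getD_eq_getElem _ _ (by rw [hPlen]; omega)]
    exact List.getElem_mem _
  -- comparison helpers
  have cAB : ∀ i j : ℕ, i % 4 = 1 → i ≤ 4*m-1 → j % 2 = 0 → 1 ≤ j → j ≤ 4*m-1 →
      Q.getD i 0 < Q.getD j 0 := fun i j h1 h2 h3 h4 h5 =>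
    hAB _ (memA i h1 h2) _ (memB j h3 h4 h5)
  have cBC : ∀ i j : ℕ, i % 2 = 0 → 1 ≤ i → i ≤ 4*m-1 → j % 4 = 3 → j ≤ 4*m-1 →
      Q.getD i 0 < Q.getD j 0 := fun i j h1 h2 h3 h4 h5 =>
    hBC _ (memB i h1 h2 h3) _ (memC j h4 h5)
  have cxP : ∀ i, 1 ≤ i → i ≤ 4*m-1 → Q.getD i 0 < Q.getD 0 0 := by
    intro i h1 h2; rw [g0]; exact (hxy _ (memP i h1 h2)).2
  have cyP : ∀ i, 1 ≤ i → i ≤ 4*m-1 → Q.getD (4*m) 0 < Q.getD i 0 := by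
    intro i h1 h2; rw [gy]; exact (hxy _ (memP i h1 h2)).1
  have hB0 : ∀ i j : ℕ, i % 4 = 0 → 1 ≤ i → i ≤ 4*m → j % 4 = 3 → j ≤ 4*m-1 →
      Q.getD i 0 < Q.getD j 0 := by
    intro i j h1 h2 h3 h4 h5
    rcases eq_or_ne i (4*m) with rfl | hne
    · exact cyP j (by omega) h5
    · exact cBC i j (by omega) h2 (by omega) h4 h5
  have hB0' : ∀ i j : ℕ, i % 4 = 0 → i ≤ 4*m-1 → j % 4 = 1 → j ≤ 4*m-1 →
      Q.getD j 0 < Q.getD i 0 := by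
    intro i j h1 h2 h3 h4
    rcases eq_or_ne i 0 with rfl | hne
    · exact cxP j (by omega) h4
    · exact hAB _ (memA j h3 h4) _ (memB i (by omega) (by omega) h2)
  -- main argument
  intro hcs
  obtain ⟨ff, ⟨t, r, hQeq⟩, aa, bb, rfl, hL2, hiso⟩ := hcs
  set s := t.length with hsdef
  set L := aa.length with hLdef
  have hLb : bb.length = L := hiso.1.symm
  have hQlen : Q.length = 4*m+1 := by
    rw [hQdef]; simp [hPlen]; omega
  have hsum : s + 2*L ≤ 4*m+1 := by
    have hh := congrArg List.length hQeq
    rw [hQlen] at hh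
    simp at hh
    omega
  have ga : ∀ i, i < L → Q.getD (s+i) 0 = aa.getD i 0 := by
    intro i hi
    have hq : Q = t ++ aa ++ (bb ++ r) := by rw [← hQeq]; simp
    rw [hq]; exact getD_mid_s6 t aa (bb ++ r) i hi
  have gb : ∀ i, i < L → Q.getD (s+L+i) 0 = bb.getD i 0 := by
    intro i hi
    have hq : Q = (t ++ aa) ++ bb ++ r := by rw [← hQeq]; simp
    have hgm := getD_mid_s6 (t ++ aa) bb r i (by omega)
    rw [List.length_append] at hgm
    rw [hq]; exact hgm
  have O : ∀ i j, i < L → j < L →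
      (Q.getD (s+i) 0 < Q.getD (s+j) 0 ↔ Q.getD (s+L+i) 0 < Q.getD (s+L+j) 0) := by
    intro i j hi hj
    rw [ga i hi, ga j hj, gb i hi, gb j hj]
    exact hiso.2 i j hi hj
  rcases (by omega : L % 4 = 0 ∨ L % 4 = 1 ∨ L % 4 = 2 ∨ L % 4 = 3) with hL | hL | hL | hL
  · -- L ≡ 0 (mod 4), L ≥ 4
    rcases (by omega : s = 0 ∨ (1 ≤ s ∧ s + 2*L = 4*m+1) ∨ (1 ≤ s ∧ s + 2*L ≤ 4*m))
      with hs0 | ⟨hs1, hsE⟩ | ⟨hs1, hsE⟩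
    · have h1 : Q.getD (s+3) 0 < Q.getD (s+0) 0 := by
        rw [hs0]; simpa using cxP 3 (by omega) (by omega)
      have h2 : Q.getD (s+L+0) 0 < Q.getD (s+L+3) 0 :=
        cBC (s+L) (s+L+3) (by omega) (by omega) (by omega) (by omega) (by omega)
      exact lt_asymm h2 ((O 3 0 (by omega) (by omega)).mp h1)
    · have h1 : Q.getD (s+0) 0 < Q.getD (s+(L-1)) 0 :=
        cAB s (s+(L-1)) (by omega) (by omega) (by omega) (by omega) (by omega)
      have hv := (O 0 (L-1) (by omega) (by omega)).mp h1
      rw [show s+L+(L-1) = 4*m by omega] at hv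
      exact lt_asymm hv (cyP (s+L) (by omega) (by omega))
    · -- interior case: extract a square from B
      obtain ⟨e0, he0⟩ : ∃ e0, e0 = s + s % 2 := ⟨_, rfl⟩
      obtain ⟨j0, hj0⟩ : ∃ j0, j0 = e0/2 - 1 := ⟨_, rfl⟩
      obtain ⟨hf, hhf⟩ : ∃ hf, hf = L/2 := ⟨_, rfl⟩
      have hA' : ∀ rr, rr < hf → aa.getD (e0 - s + 2*rr) 0 = B.getD (j0 + rr) 0 := by
        intro rr hrr
        rw [← ga (e0 - s + 2*rr) (by omega)]
        rw [show s + (e0 - s + 2*rr) = e0 + 2*rr by omega]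
        rw [gBeq (e0 + 2*rr) (by omega) (by omega) (by omega)]
        congr 1; omega
      have hB' : ∀ rr, rr < hf → bb.getD (e0 - s + 2*rr) 0 = B.getD (j0 + hf + rr) 0 := by
        intro rr hrr
        rw [← gb (e0 - s + 2*rr) (by omega)]
        rw [show s + L + (e0 - s + 2*rr) = e0 + L + 2*rr by omega]
        rw [gBeq (e0 + L + 2*rr) (by omega) (by omega) (by omega)]
        congr 1; omega
      have hj0L : j0 + L ≤ 2*m - 1 := by omega
      have ga' : ∀ rr, rr < hf → ((B.drop j0).take hf).getD rr 0 = B.getD (j0 + rr) 0 := by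
        intro rr hrr
        rw [List.getD_eq_getElem _ _ (by simp [hB]; omega)]
        rw [List.getElem_take, List.getElem_drop]
        exact (List.getD_eq_getElem B 0 (show j0 + rr < B.length by rw [hB]; omega)).symm
      have gb' : ∀ rr, rr < hf →
          (((B.drop j0).drop hf).take hf).getD rr 0 = B.getD (j0 + hf + rr) 0 := by
        intro rr hrr
        rw [List.getD_eq_getElem _ _ (by simp [hB]; omega)]
        rw [List.getElem_take, List.getElem_drop, List.getElem_drop]
        rw [List.getD_eq_getElem B 0 (show j0 + hf + rr < B.length by rw [hB]; omega)]
        congr 1; omega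
      refine hBsf ⟨(B.drop j0).take L, ⟨B.take j0, B.drop (j0 + L), ?_⟩,
        (B.drop j0).take hf, ((B.drop j0).drop hf).take hf, ?_, ?_, ?_, ?_⟩
      · rw [show B.drop (j0 + L) = (B.drop j0).drop L from List.drop_drop.symm]
        rw [List.append_assoc, List.take_append_drop, List.take_append_drop]
      · rw [show L = hf + hf by omega, List.take_add]
      · simp [hB]; omega
      · simp [hB]; omega
      · intro i j hi hj
        have hi' : i < hf := by simp [hB] at hi; omega
        have hj' : j < hf := by simp [hB] at hj; omega
        rw [ga' i hi', ga' j hj', gb' i hi', gb' j hj',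
            ← hA' i hi', ← hA' j hj', ← hB' i hi', ← hB' j hj']
        exact hiso.2 (e0 - s + 2*i) (e0 - s + 2*j) (by omega) (by omega)
  · -- L ≡ 1 (mod 4), L ≥ 5
    rcases (by omega : s % 4 = 0 ∨ s % 4 = 1 ∨ s % 4 = 2 ∨ s % 4 = 3) with hs | hs | hs | hs
    · have h1 : Q.getD (s+1) 0 < Q.getD (s+0) 0 :=
        hB0' s (s+1) (by omega) (by omega) (by omega) (by omega)
      have h2 : Q.getD (s+L+0) 0 < Q.getD (s+L+1) 0 :=
        cAB (s+L) (s+L+1) (by omega) (by omega) (by omega) (by omega) (by omega)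
      exact lt_asymm h2 ((O 1 0 (by omega) (by omega)).mp h1)
    · have h1 : Q.getD (s+1) 0 < Q.getD (s+2) 0 :=
        cBC (s+1) (s+2) (by omega) (by omega) (by omega) (by omega) (by omega)
      have h2 : Q.getD (s+L+2) 0 < Q.getD (s+L+1) 0 :=
        hB0 (s+L+2) (s+L+1) (by omega) (by omega) (by omega) (by omega) (by omega)
      exact lt_asymm h2 ((O 1 2 (by omega) (by omega)).mp h1)
    · have h1 : Q.getD (s+0) 0 < Q.getD (s+1) 0 :=
        cBC s (s+1) (by omega) (by omega) (by omega) (by omega) (by omega)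
      have h2 : Q.getD (s+L+1) 0 < Q.getD (s+L+0) 0 :=
        hB0 (s+L+1) (s+L) (by omega) (by omega) (by omega) (by omega) (by omega)
      exact lt_asymm h2 ((O 0 1 (by omega) (by omega)).mp h1)
    · have h1 : Q.getD (s+2) 0 < Q.getD (s+1) 0 :=
        cAB (s+2) (s+1) (by omega) (by omega) (by omega) (by omega) (by omega)
      have h2 : Q.getD (s+L+1) 0 < Q.getD (s+L+2) 0 :=
        cAB (s+L+1) (s+L+2) (by omega) (by omega) (by omega) (by omega) (by omega)
      exact lt_asymm h2 ((O 2 1 (by omega) (by omega)).mp h1)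
  · -- L ≡ 2 (mod 4), L ≥ 2
    rcases (by omega : s % 4 = 0 ∨ s % 4 = 1 ∨ s % 4 = 2 ∨ s % 4 = 3) with hs | hs | hs | hs
    · have h1 : Q.getD (s+1) 0 < Q.getD (s+0) 0 :=
        hB0' s (s+1) (by omega) (by omega) (by omega) (by omega)
      have h2 : Q.getD (s+L+0) 0 < Q.getD (s+L+1) 0 :=
        cBC (s+L) (s+L+1) (by omega) (by omega) (by omega) (by omega) (by omega)
      exact lt_asymm h2 ((O 1 0 (by omega) (by omega)).mp h1)
    · have h1 : Q.getD (s+0) 0 < Q.getD (s+1) 0 :=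
        cAB s (s+1) (by omega) (by omega) (by omega) (by omega) (by omega)
      have h2 : Q.getD (s+L+1) 0 < Q.getD (s+L+0) 0 :=
        hB0 (s+L+1) (s+L) (by omega) (by omega) (by omega) (by omega) (by omega)
      exact lt_asymm h2 ((O 0 1 (by omega) (by omega)).mp h1)
    · have h1 : Q.getD (s+0) 0 < Q.getD (s+1) 0 :=
        cBC s (s+1) (by omega) (by omega) (by omega) (by omega) (by omega)
      have h2 : Q.getD (s+L+1) 0 < Q.getD (s+L+0) 0 :=
        cAB (s+L+1) (s+L) (by omega) (by omega) (by omega) (by omega) (by omega)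
      exact lt_asymm h2 ((O 0 1 (by omega) (by omega)).mp h1)
    · have h1 : Q.getD (s+1) 0 < Q.getD (s+0) 0 :=
        cBC (s+1) s (by omega) (by omega) (by omega) (by omega) (by omega)
      have h2 : Q.getD (s+L+0) 0 < Q.getD (s+L+1) 0 :=
        cAB (s+L) (s+L+1) (by omega) (by omega) (by omega) (by omega) (by omega)
      exact lt_asymm h2 ((O 1 0 (by omega) (by omega)).mp h1)
  · -- L ≡ 3 (mod 4), L ≥ 3
    rcases (by omega : s % 4 = 0 ∨ s % 4 = 1 ∨ s % 4 = 2 ∨ s % 4 = 3) with hs | hs | hs | hs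
    · have h1 : Q.getD (s+1) 0 < Q.getD (s+2) 0 :=
        cAB (s+1) (s+2) (by omega) (by omega) (by omega) (by omega) (by omega)
      have h2 : Q.getD (s+L+2) 0 < Q.getD (s+L+1) 0 :=
        cAB (s+L+2) (s+L+1) (by omega) (by omega) (by omega) (by omega) (by omega)
      exact lt_asymm h2 ((O 1 2 (by omega) (by omega)).mp h1)
    · have h1 : Q.getD (s+0) 0 < Q.getD (s+1) 0 :=
        cAB s (s+1) (by omega) (by omega) (by omega) (by omega) (by omega)
      have h2 : Q.getD (s+L+1) 0 < Q.getD (s+L+0) 0 :=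
        cAB (s+L+1) (s+L) (by omega) (by omega) (by omega) (by omega) (by omega)
      exact lt_asymm h2 ((O 0 1 (by omega) (by omega)).mp h1)
    · have h1 : Q.getD (s+2) 0 < Q.getD (s+1) 0 :=
        cBC (s+2) (s+1) (by omega) (by omega) (by omega) (by omega) (by omega)
      have h2 : Q.getD (s+L+1) 0 < Q.getD (s+L+2) 0 :=
        cBC (s+L+1) (s+L+2) (by omega) (by omega) (by omega) (by omega) (by omega)
      exact lt_asymm h2 ((O 2 1 (by omega) (by omega)).mp h1)
    · have h1 : Q.getD (s+1) 0 < Q.getD (s+0) 0 :=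
        cBC (s+1) s (by omega) (by omega) (by omega) (by omega) (by omega)
      have h2 : Q.getD (s+L+0) 0 < Q.getD (s+L+1) 0 :=
        cBC (s+L) (s+L+1) (by omega) (by omega) (by omega) (by omega) (by omega)
      exact lt_asymm h2 ((O 1 0 (by omega) (by omega)).mp h1)
end

section
/- Let P₂ be a permutation constructed by Construction 2 (pattern u₁v₁w₁v₂u₂v₃w₂… of length 4m-1, where all symbols of U are above those of V, which are above those of W, and V is square-free). Let z and t be integers with z < b < t for every symbol b of P₂. Then the permutation z P₂ t is square-free. -/
def lvl (m j : ℕ) : ℕ :=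
  if j = 0 then 0 else if j = 4*m then 4
  else if j % 4 = 1 then 3 else if j % 4 = 3 then 1 else 2

lemma lvl_z (m : ℕ) : lvl m 0 = 0 := by unfold lvl; split_ifs <;> (try contradiction) <;> omega
lemma lvl_t (m : ℕ) (hm : 1 ≤ m) : lvl m (4*m) = 4 := by
  unfold lvl; split_ifs <;> (try contradiction) <;> omega
lemma lvl_U (m j : ℕ) (h1 : j % 4 = 1) (h4 : j ≠ 4*m) : lvl m j = 3 := by
  unfold lvl; split_ifs <;> (try contradiction) <;> omega
lemma lvl_W (m j : ℕ) (h1 : j % 4 = 3) : lvl m j = 1 := by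
  unfold lvl; split_ifs <;> (try contradiction) <;> omega
lemma lvl_V (m j : ℕ) (h1 : j % 2 = 0) (h0 : j ≠ 0) (h4 : j ≠ 4*m) : lvl m j = 2 := by
  unfold lvl; split_ifs <;> (try contradiction) <;> omega
lemma lvl_le (m j : ℕ) : lvl m j ≤ 4 := by
  unfold lvl; split_ifs <;> omega

lemma exists_reversal (m L s : ℕ) (hm : 1 ≤ m) (hL : 2 ≤ L)
    (hs : s + 2*L ≤ 4*m+1)
    (hcase : L % 4 ≠ 0 ∨ s = 0 ∨ s + 2*L = 4*m+1) :
    ∃ k k', k < L ∧ k' < L ∧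
      lvl m (s+k) < lvl m (s+k') ∧ lvl m (s+L+k') < lvl m (s+L+k) := by
  have h4 : L % 4 = 0 ∨ L % 4 = 1 ∨ L % 4 = 2 ∨ L % 4 = 3 := by omega
  have hs4 : s % 4 = 0 ∨ s % 4 = 1 ∨ s % 4 = 2 ∨ s % 4 = 3 := by omega
  rcases h4 with h | h | h | h
  · -- L % 4 = 0, so L ≥ 4
    rcases hcase with hc | hc | hc
    · omega
    · -- s = 0 : use (0,3):  0 = lvl 0 < lvl 3 = 1 ;  lvl (L+3) = 1 < 2 = lvl L
      subst hc
      refine ⟨0, 3, by omega, by omega, ?_, ?_⟩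
      · rw [show (0:ℕ)+0 = 0 by rfl, lvl_z, lvl_W m (0+3) (by omega)]; omega
      · rw [lvl_W m (0+L+3) (by omega), lvl_V m (0+L+0) (by omega) (by omega) (by omega)]; omega
    · -- s + 2L = 4m+1 : use (L-1, 0); s % 4 = 1
      refine ⟨L-1, 0, by omega, by omega, ?_, ?_⟩
      · rw [lvl_V m (s+(L-1)) (by omega) (by omega) (by omega),
            lvl_U m (s+0) (by omega) (by omega)]; omega
      · rw [lvl_U m (s+L+0) (by omega) (by omega),
            show s+L+(L-1) = 4*m by omega, lvl_t m hm]; omega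
  · -- L % 4 = 1, so L ≥ 5
    rcases hs4 with h' | h' | h' | h'
    ·
      -- residues: s≡0, s+1≡1(U); s+L≡1(U), s+L+1≡2(V)
      refine ⟨0, 1, by omega, by omega, ?_, ?_⟩
      · rw [lvl_U m (s+1) (by omega) (by omega)]
        rcases Nat.eq_zero_or_pos s with h0 | h0
        · subst h0; rw [show (0:ℕ)+0 = 0 by rfl, lvl_z]; omega
        · rw [lvl_V m (s+0) (by omega) (by omega) (by omega)]; omega
      · rw [lvl_V m (s+L+1) (by omega) (by omega) (by omega),
            lvl_U m (s+L+0) (by omega) (by omega)]; omega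
    · -- s≡1 : (2,1): s+2≡3(W) < s+1≡2(V) ; shifted: s+L+1≡3(W) < s+L+2≡0(V)
      refine ⟨2, 1, by omega, by omega, ?_, ?_⟩
      · rw [lvl_W m (s+2) (by omega), lvl_V m (s+1) (by omega) (by omega) (by omega)]; omega
      · rw [lvl_W m (s+L+1) (by omega), lvl_V m (s+L+2) (by omega) (by omega) (by omega)]; omega
    · -- s≡2 : (1,0): s+1≡3(W) < s≡2(V) ; shifted: s+L≡3(W) < s+L+1≡0(V)
      refine ⟨1, 0, by omega, by omega, ?_, ?_⟩
      · rw [lvl_W m (s+1) (by omega), lvl_V m (s+0) (by omega) (by omega) (by omega)]; omega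
      · rw [lvl_W m (s+L+0) (by omega), lvl_V m (s+L+1) (by omega) (by omega) (by omega)]; omega
    · -- s≡3 : (1,2): s+1≡0(V) < s+2≡1(U) ; shifted: s+L+2≡2(V) < s+L+1≡1(U)
      refine ⟨1, 2, by omega, by omega, ?_, ?_⟩
      · rw [lvl_V m (s+1) (by omega) (by omega) (by omega),
            lvl_U m (s+2) (by omega) (by omega)]; omega
      · rw [lvl_V m (s+L+2) (by omega) (by omega) (by omega),
            lvl_U m (s+L+1) (by omega) (by omega)]; omega
  · -- L % 4 = 2
    rcases hs4 with h' | h' | h' | h'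
    · -- (0,1): s≡0 {0,2} < s+1≡1(U)=3 ; shifted: s+L+1≡3(W)=1 < s+L≡2(V)=2
      refine ⟨0, 1, by omega, by omega, ?_, ?_⟩
      · rw [lvl_U m (s+1) (by omega) (by omega)]
        rcases Nat.eq_zero_or_pos s with h0 | h0
        · subst h0; rw [show (0:ℕ)+0 = 0 by rfl, lvl_z]; omega
        · rw [lvl_V m (s+0) (by omega) (by omega) (by omega)]; omega
      · rw [lvl_W m (s+L+1) (by omega), lvl_V m (s+L+0) (by omega) (by omega) (by omega)]; omega
    · -- s≡1: (1,0): s+1≡2(V)=2 < s≡1(U)=3 ; shifted: s+L≡3(W)=1 < s+L+1≡0(V or t)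
      refine ⟨1, 0, by omega, by omega, ?_, ?_⟩
      · rw [lvl_V m (s+1) (by omega) (by omega) (by omega),
            lvl_U m (s+0) (by omega) (by omega)]; omega
      · rw [lvl_W m (s+L+0) (by omega)]
        rcases Nat.lt_or_ge (s+L+1) (4*m) with h0 | h0
        · rw [lvl_V m (s+L+1) (by omega) (by omega) (by omega)]; omega
        · rw [show s+L+1 = 4*m by omega, lvl_t m hm]; omega
    · -- s≡2: (1,0): s+1≡3(W)=1 < s≡2(V)=2 ; shifted: s+L≡0(V)=2 < s+L+1≡1(U)=3
      refine ⟨1, 0, by omega, by omega, ?_, ?_⟩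
      · rw [lvl_W m (s+1) (by omega), lvl_V m (s+0) (by omega) (by omega) (by omega)]; omega
      · rw [lvl_V m (s+L+0) (by omega) (by omega) (by omega),
            lvl_U m (s+L+1) (by omega) (by omega)]; omega
    · -- s≡3: (0,1): s≡3(W)=1 < s+1≡0(V)=2 ; shifted: s+L+1≡2(V)=2 < s+L≡1(U)=3
      refine ⟨0, 1, by omega, by omega, ?_, ?_⟩
      · rw [lvl_W m (s+0) (by omega), lvl_V m (s+1) (by omega) (by omega) (by omega)]; omega
      · rw [lvl_V m (s+L+1) (by omega) (by omega) (by omega),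
            lvl_U m (s+L+0) (by omega) (by omega)]; omega
  · -- L % 4 = 3, so L ≥ 3
    rcases hs4 with h' | h' | h' | h'
    · -- s≡0: (2,1): s+2≡2(V)=2 < s+1≡1(U)=3 ; shifted: s+L+1≡0(V)=2 < s+L+2≡1(U)=3
      refine ⟨2, 1, by omega, by omega, ?_, ?_⟩
      · rw [lvl_V m (s+2) (by omega) (by omega) (by omega),
            lvl_U m (s+1) (by omega) (by omega)]; omega
      · rw [lvl_V m (s+L+1) (by omega) (by omega) (by omega),
            lvl_U m (s+L+2) (by omega) (by omega)]; omega
    · -- s≡1: (1,0): s+1≡2(V)=2 < s≡1(U)=3 ; shifted: s+L≡0(V)=2 < s+L+1≡1(U)=3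
      refine ⟨1, 0, by omega, by omega, ?_, ?_⟩
      · rw [lvl_V m (s+1) (by omega) (by omega) (by omega),
            lvl_U m (s+0) (by omega) (by omega)]; omega
      · rw [lvl_V m (s+L+0) (by omega) (by omega) (by omega),
            lvl_U m (s+L+1) (by omega) (by omega)]; omega
    · -- s≡2: (1,2): s+1≡3(W)=1 < s+2≡0(V)=2 ; shifted: s+L+2≡3(W)=1 < s+L+1≡2(V)=2
      refine ⟨1, 2, by omega, by omega, ?_, ?_⟩
      · rw [lvl_W m (s+1) (by omega), lvl_V m (s+2) (by omega) (by omega) (by omega)]; omega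
      · rw [lvl_W m (s+L+2) (by omega), lvl_V m (s+L+1) (by omega) (by omega) (by omega)]; omega
    · -- s≡3: (0,1): s≡3(W)=1 < s+1≡0(V)=2 ; shifted: s+L+1≡3(W)=1 < s+L≡2(V)=2
      refine ⟨0, 1, by omega, by omega, ?_, ?_⟩
      · rw [lvl_W m (s+0) (by omega), lvl_V m (s+1) (by omega) (by omega) (by omega)]; omega
      · rw [lvl_W m (s+L+1) (by omega), lvl_V m (s+L+0) (by omega) (by omega) (by omega)]; omega

theorem stmt7 (m : ℕ) (hm : 1 ≤ m) (U V W : List ℤ)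
    (hU : U.length = m) (hV : V.length = 2*m - 1) (hW : W.length = m)
    (hUn : U.Nodup) (hVn : V.Nodup) (hWn : W.Nodup)
    (hUV : ∀ u ∈ U, ∀ v ∈ V, v < u) (hVW : ∀ v ∈ V, ∀ w ∈ W, w < v)
    (hVsf : SquareFreeL V)
    (z t : ℤ) (hzt : ∀ b ∈ interleave U V W m, z < b ∧ b < t) :
    SquareFreeL (z :: interleave U V W m ++ [t]) := by
  intro hsq
  set P := interleave U V W m with hPdef
  have hPlen : P.length = 4*m - 1 := by rw [hPdef]; simp [interleave]
  -- getD formula for P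
  have hPget : ∀ k, k < 4*m-1 → P.getD k 0 =
      (if (k+1) % 4 = 1 then U.getD ((k+4)/4 - 1) 0
       else if (k+1) % 4 = 3 then W.getD ((k+2)/4 - 1) 0
       else V.getD ((k+1)/2 - 1) 0) := by
    intro k hk
    rw [hPdef]
    unfold interleave
    rw [List.getD_eq_getElem _ _ (by simpa using hk), List.getElem_map, List.getElem_range]
  -- facts about Q := z :: P ++ [t]
  have hq0 : (z :: P ++ [t]).getD 0 0 = z := rfl
  have hqP : ∀ j, 1 ≤ j → j ≤ 4*m-1 → (z :: P ++ [t]).getD j 0 = P.getD (j-1) 0 := by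
    intro j h1 h2
    obtain ⟨j', rfl⟩ : ∃ j', j = j' + 1 := ⟨j - 1, by omega⟩
    rw [List.cons_append, List.getD_cons_succ, List.getD_append _ _ _ _ (by omega)]
    simp
  have hqt : (z :: P ++ [t]).getD (4*m) 0 = t := by
    obtain ⟨j', hj'⟩ : ∃ j', 4*m = j' + 1 := ⟨4*m - 1, by omega⟩
    rw [hj', List.cons_append, List.getD_cons_succ, List.getD_append_right _ _ _ _ (by omega)]
    have : j' - P.length = 0 := by omega
    rw [this]; rfl
  have hmemP : ∀ j, 1 ≤ j → j ≤ 4*m-1 → (z :: P ++ [t]).getD j 0 ∈ P := by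
    intro j h1 h2
    rw [hqP j h1 h2, List.getD_eq_getElem _ _ (by omega)]
    exact List.getElem_mem _
  have hqV : ∀ j, 1 ≤ j → j ≤ 4*m-1 → j % 2 = 0 →
      (z :: P ++ [t]).getD j 0 = V.getD (j/2 - 1) 0 := by
    intro j h1 h2 h3
    rw [hqP j h1 h2, hPget (j-1) (by omega)]
    have e1 : ¬ ((j-1)+1) % 4 = 1 := by omega
    have e2 : ¬ ((j-1)+1) % 4 = 3 := by omega
    rw [if_neg e1, if_neg e2]
    congr 1
    omega
  have hqU : ∀ j, 1 ≤ j → j ≤ 4*m-1 → j % 4 = 1 → (z :: P ++ [t]).getD j 0 ∈ U := by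
    intro j h1 h2 h3
    rw [hqP j h1 h2, hPget (j-1) (by omega)]
    rw [if_pos (by omega : ((j-1)+1) % 4 = 1)]
    rw [List.getD_eq_getElem _ _ (by rw [hU]; omega)]
    exact List.getElem_mem _
  have hqW : ∀ j, 1 ≤ j → j ≤ 4*m-1 → j % 4 = 3 → (z :: P ++ [t]).getD j 0 ∈ W := by
    intro j h1 h2 h3
    rw [hqP j h1 h2, hPget (j-1) (by omega)]
    rw [if_neg (by omega : ¬ ((j-1)+1) % 4 = 1), if_pos (by omega : ((j-1)+1) % 4 = 3)]
    rw [List.getD_eq_getElem _ _ (by rw [hW]; omega)]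
    exact List.getElem_mem _
  have hqVmem : ∀ j, 1 ≤ j → j ≤ 4*m-1 → j % 2 = 0 → (z :: P ++ [t]).getD j 0 ∈ V := by
    intro j h1 h2 h3
    rw [hqV j h1 h2 h3, List.getD_eq_getElem _ _ (by rw [hV]; omega)]
    exact List.getElem_mem _
  have hzt' : z < t := by
    have hmem : P.getD 0 0 ∈ P := by
      rw [List.getD_eq_getElem _ _ (by omega)]; exact List.getElem_mem _
    have := hzt _ hmem
    linarith [this.1, this.2]
  have hv0 : V.getD 0 0 ∈ V := by
    rw [List.getD_eq_getElem _ _ (by rw [hV]; omega)]; exact List.getElem_mem _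
  -- monotonicity along levels
  have hmono : ∀ i j, i ≤ 4*m → j ≤ 4*m → lvl m i < lvl m j →
      (z :: P ++ [t]).getD i 0 < (z :: P ++ [t]).getD j 0 := by
    have classify : ∀ p, p ≤ 4*m → (p = 0 ∧ lvl m p = 0) ∨ (p = 4*m ∧ lvl m p = 4) ∨
        (1 ≤ p ∧ p ≤ 4*m-1 ∧
          ((lvl m p = 3 ∧ (z :: P ++ [t]).getD p 0 ∈ U) ∨
           (lvl m p = 1 ∧ (z :: P ++ [t]).getD p 0 ∈ W) ∨
           (lvl m p = 2 ∧ (z :: P ++ [t]).getD p 0 ∈ V))) := by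
      intro p hp
      by_cases h0 : p = 0
      · exact Or.inl ⟨h0, h0 ▸ lvl_z m⟩
      by_cases h4 : p = 4*m
      · exact Or.inr (Or.inl ⟨h4, h4 ▸ lvl_t m hm⟩)
      refine Or.inr (Or.inr ⟨by omega, by omega, ?_⟩)
      have hr : p % 4 = 0 ∨ p % 4 = 1 ∨ p % 4 = 2 ∨ p % 4 = 3 := by omega
      rcases hr with h | h | h | h
      · exact Or.inr (Or.inr ⟨lvl_V m p (by omega) h0 h4, hqVmem p (by omega) (by omega) (by omega)⟩)
      · exact Or.inl ⟨lvl_U m p h h4, hqU p (by omega) (by omega) h⟩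
      · exact Or.inr (Or.inr ⟨lvl_V m p (by omega) h0 h4, hqVmem p (by omega) (by omega) (by omega)⟩)
      · exact Or.inr (Or.inl ⟨lvl_W m p h, hqW p (by omega) (by omega) h⟩)
    intro i j hi hj hlt
    rcases classify i hi with ⟨hi0, hli⟩ | ⟨hi4, hli⟩ | ⟨hi1, hi2, hcl⟩
    · -- i = 0 : z < everything
      subst hi0
      rw [hq0]
      rcases classify j hj with ⟨hj0, hlj⟩ | ⟨hj4, hlj⟩ | ⟨hj1, hj2, hcl'⟩
      · omega
      · rw [hj4, hqt]; exact hzt'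
      · exact (hzt _ (hmemP j hj1 hj2)).1
    · have := lvl_le m j; omega
    · rcases classify j hj with ⟨hj0, hlj⟩ | ⟨hj4, hlj⟩ | ⟨hj1, hj2, hcl'⟩
      · rcases hcl with ⟨e1, _⟩ | ⟨e1, _⟩ | ⟨e1, _⟩ <;> omega
      · rw [hj4, hqt]
        exact (hzt _ (hmemP i hi1 hi2)).2
      · rcases hcl with ⟨e1, hx⟩ | ⟨e1, hx⟩ | ⟨e1, hx⟩ <;>
          rcases hcl' with ⟨e2, hy⟩ | ⟨e2, hy⟩ | ⟨e2, hy⟩ <;> (try omega) <;>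
          first
            | exact lt_trans (hVW _ hv0 _ hx) (hUV _ hy _ hv0)
            | exact hVW _ hy _ hx
            | exact hUV _ hy _ hx
  -- unpack the square
  obtain ⟨F, ⟨pre, suf, hQ⟩, A, B, hF, hA2, hlen, hiso⟩ := hsq
  subst hF
  have hLB : B.length = A.length := hlen.symm
  have hQL : pre.length + (A.length + A.length) + suf.length = 4*m + 1 := by
    have := congrArg List.length hQ
    simp [hPlen, hLB] at this
    omega
  have hsL : pre.length + 2*A.length ≤ 4*m+1 := by omega
  -- getD of Q in the two halves
  have hqA : ∀ k, k < A.length → A.getD k 0 = (z :: P ++ [t]).getD (pre.length + k) 0 := by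
    intro k hk
    have e : pre.length + k - pre.length = k := by omega
    rw [← hQ, List.append_assoc, List.getD_append_right _ _ _ _ (by omega), e,
        List.getD_append _ _ _ _ (by simp only [List.length_append]; omega),
        List.getD_append _ _ _ _ (by omega)]
  have hqB : ∀ k, k < A.length →
      B.getD k 0 = (z :: P ++ [t]).getD (pre.length + A.length + k) 0 := by
    intro k hk
    have e1 : pre.length + A.length + k - pre.length = A.length + k := by omega
    have e2 : A.length + k - A.length = k := by omega
    rw [← hQ, List.append_assoc, List.getD_append_right _ _ _ _ (by omega), e1,
        List.getD_append _ _ _ _ (by simp only [List.length_append]; omega),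
        List.getD_append_right _ _ _ _ (by omega), e2]
  have key : ∀ k k', k < A.length → k' < A.length →
      ((z :: P ++ [t]).getD (pre.length + k) 0 < (z :: P ++ [t]).getD (pre.length + k') 0 ↔
       (z :: P ++ [t]).getD (pre.length + A.length + k) 0 <
         (z :: P ++ [t]).getD (pre.length + A.length + k') 0) := by
    intro k k' hk hk'
    rw [← hqA k hk, ← hqA k' hk', ← hqB k hk, ← hqB k' hk']
    exact hiso k k' hk hk'
  by_cases hc : 1 ≤ pre.length ∧ pre.length + 2*A.length ≤ 4*m ∧ A.length % 4 = 0
  · -- the induced square sits inside V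
    obtain ⟨hs1, hsm, hL4⟩ := hc
    have hLge : 4 ≤ A.length := by omega
    obtain ⟨c, hc1, hc2⟩ : ∃ c, pre.length ≤ 2*c+2 ∧ 2*c+2 ≤ pre.length+1 :=
      ⟨(pre.length-1)/2, by omega, by omega⟩
    obtain ⟨H, hH⟩ : ∃ H, A.length = 2*H := ⟨A.length/2, by omega⟩
    have hcL : 2*c+2 + 2*A.length ≤ 4*m := by omega
    have hcV : c + A.length ≤ 2*m - 1 := by omega
    -- the two V-halves
    have lenA' : ((V.drop c).take H).length = H := by
      simp [hV]; omega
    have lenB' : ((V.drop (c+H)).take H).length = H := by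
      simp [hV]; omega
    have gA : ∀ i, i < H → ((V.drop c).take H).getD i 0 =
        (z :: P ++ [t]).getD (2*c+2 + 2*i) 0 := by
      intro i hi
      rw [List.getD_eq_getElem _ _ (by rw [lenA']; exact hi)]
      rw [List.getElem_take, List.getElem_drop]
      rw [hqV (2*c+2+2*i) (by omega) (by omega) (by omega)]
      rw [List.getD_eq_getElem _ _ (by rw [hV]; omega)]
      congr 1
      omega
    have gB : ∀ i, i < H → ((V.drop (c+H)).take H).getD i 0 =
        (z :: P ++ [t]).getD (2*c+2 + A.length + 2*i) 0 := by
      intro i hi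
      rw [List.getD_eq_getElem _ _ (by rw [lenB']; exact hi)]
      rw [List.getElem_take, List.getElem_drop]
      rw [hqV (2*c+2+A.length+2*i) (by omega) (by omega) (by omega)]
      rw [List.getD_eq_getElem _ _ (by rw [hV]; omega)]
      congr 1
      omega
    apply hVsf
    refine ⟨(V.drop c).take H ++ (V.drop (c+H)).take H, ?_, (V.drop c).take H,
      (V.drop (c+H)).take H, rfl, by rw [lenA']; omega, ?_⟩
    · -- infix of V
      have e1 : (V.drop c).take (H+H) = (V.drop c).take H ++ ((V.drop c).drop H).take H :=
        List.take_add
      have e2 : (V.drop c).drop H = V.drop (c+H) := by rw [List.drop_drop, Nat.add_comm]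
      rw [← e2]
      rw [← e1]
      exact ((List.take_prefix _ _).isInfix).trans ((List.drop_suffix _ _).isInfix)
    · constructor
      · rw [lenA', lenB']
      intro i j hi hj
      rw [lenA'] at hi hj
      rw [gA i hi, gA j hj, gB i hi, gB j hj]
      have e3 : 2*c+2 + 2*i = pre.length + ((2*c+2 - pre.length) + 2*i) := by omega
      have e4 : 2*c+2 + 2*j = pre.length + ((2*c+2 - pre.length) + 2*j) := by omega
      have e5 : 2*c+2 + A.length + 2*i =
          pre.length + A.length + ((2*c+2 - pre.length) + 2*i) := by omega
      have e6 : 2*c+2 + A.length + 2*j =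
          pre.length + A.length + ((2*c+2 - pre.length) + 2*j) := by omega
      rw [e3, e4, e5, e6]
      exact key _ _ (by omega) (by omega)
  · -- level-reversal contradiction
    have hcase : A.length % 4 ≠ 0 ∨ pre.length = 0 ∨ pre.length + 2*A.length = 4*m+1 := by
      by_contra hcon
      push_neg at hcon
      exact hc ⟨by omega, by omega, by omega⟩
    obtain ⟨k, k', hk, hk', h1, h2⟩ :=
      exists_reversal m A.length pre.length hm hA2 hsL hcase
    have e1 : (z :: P ++ [t]).getD (pre.length+k) 0 < (z :: P ++ [t]).getD (pre.length+k') 0 :=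
      hmono _ _ (by omega) (by omega) h1
    have e2 : (z :: P ++ [t]).getD (pre.length+A.length+k') 0 <
        (z :: P ++ [t]).getD (pre.length+A.length+k) 0 :=
      hmono _ _ (by omega) (by omega) h2
    exact absurd ((key k k' hk hk').mp e1) (not_lt.mpr (le_of_lt e2))
end

section
/- A square-free permutation of length n, where n ≥ 5, is {0,1,…,n}-crucial (S-crucial) if and only if it is {0,1,2,n-2,n-1,n}-crucial. -/
lemma take_drop_infix (L : List ℤ) (j m : ℕ) : (L.drop j).take m <:+: L :=
  ((L.drop j).take_prefix m).isInfix.trans (L.drop_suffix j).isInfix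

lemma no4 (L : List ℤ) (hnd : L.Nodup) (hsf : ¬ ContainsSquare L)
    (j : ℕ) (hj : j + 3 < L.length)
    (h : L.getD j 0 < L.getD (j+1) 0 ↔ L.getD (j+2) 0 < L.getD (j+3) 0) : False := by
  have h0 : j < L.length := by omega
  have h1 : j + 1 < L.length := by omega
  have h2 : j + 2 < L.length := by omega
  rw [L.getD_eq_getElem 0 h0, L.getD_eq_getElem 0 h1, L.getD_eq_getElem 0 h2,
    L.getD_eq_getElem 0 hj] at h
  have ne1 : L[j] ≠ L[j+1] := fun he => by
    have := (hnd.getElem_inj_iff).mp he; omega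
  have ne2 : L[j+2] ≠ L[j+3] := fun he => by
    have := (hnd.getElem_inj_iff).mp he; omega
  apply hsf
  have hfac : (L.drop j).take 4 = [L[j], L[j+1], L[j+2], L[j+3]] := by
    apply List.ext_getElem
    · simp [List.length_take, List.length_drop]; omega
    · intro k hk1 hk2
      simp only [List.getElem_take, List.getElem_drop]
      simp only [List.length_take, List.length_drop] at hk1
      have hk4 : k < 4 := by omega
      interval_cases k <;> simp
  refine ⟨(L.drop j).take 4, take_drop_infix L j 4,
    [L[j], L[j+1]], [L[j+2], L[j+3]], by rw [hfac]; rfl, by simp, by simp, ?_⟩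
  intro a b ha hb
  simp only [List.length_cons, List.length_nil] at ha hb
  interval_cases a <;> interval_cases b <;> simp [List.getD] <;> omega

theorem stmt11 (n : ℕ) (hn : 5 ≤ n) (P : List ℤ) (hnd : P.Nodup)
    (hlen : P.length = n) (hsf : SquareFreeL P) :
    (∀ i ≤ n, ∀ Q : List ℤ, ExtL Q P i → ContainsSquare Q) ↔
    (∀ i ∈ ({0, 1, 2, n - 2, n - 1, n} : Set ℕ), ∀ Q : List ℤ,
      ExtL Q P i → ContainsSquare Q) := by
  constructor
  · intro h i hi Q hQ
    apply h i ?_ Q hQ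
    simp only [Set.mem_insert_iff, Set.mem_singleton_iff] at hi
    omega
  · intro h i hi Q hQ
    by_cases hmem : i ∈ ({0, 1, 2, n - 2, n - 1, n} : Set ℕ)
    · exact h i hmem Q hQ
    · by_contra hns
      simp only [Set.mem_insert_iff, Set.mem_singleton_iff] at hmem
      push_neg at hmem
      obtain ⟨m, rfl, hm6⟩ : ∃ m, i = m + 3 ∧ m + 6 ≤ n := ⟨i - 3, by omega, by omega⟩
      obtain ⟨hQnd, hQlen, hile, hiso⟩ := hQ
      rw [hlen] at hQlen hile
      set E := Q.eraseIdx (m + 3) with hE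
      have hElen : E.length = n := by
        rw [hE, List.length_eraseIdx_of_lt] <;> omega
      have hlt : ∀ j, j < m + 3 → j < n → E.getD j 0 = Q.getD j 0 := by
        intro j hj hjn
        have hjE : j < E.length := by omega
        rw [E.getD_eq_getElem 0 hjE, Q.getD_eq_getElem 0 (by omega)]
        exact List.getElem_eraseIdx_of_lt hjE hj
      have hge : ∀ j, m + 3 ≤ j → j < n → E.getD j 0 = Q.getD (j + 1) 0 := by
        intro j hj hjn
        have hjE : j < E.length := by omega
        rw [E.getD_eq_getElem 0 hjE, Q.getD_eq_getElem 0 (by omega)]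
        exact List.getElem_eraseIdx_of_ge hjE hj
      have EP : ∀ k, k + 3 < n →
          ¬(E.getD k 0 < E.getD (k+1) 0 ↔ E.getD (k+2) 0 < E.getD (k+3) 0) := by
        intro k hk hiff
        have t1 := hiso.2 k (k+1) (by omega) (by omega)
        have t2 := hiso.2 (k+2) (k+3) (by omega) (by omega)
        exact no4 P hnd hsf k (by omega) ((t1.symm.trans hiff).trans t2)
      have QP : ∀ k, k + 3 < n + 1 →
          ¬(Q.getD k 0 < Q.getD (k+1) 0 ↔ Q.getD (k+2) 0 < Q.getD (k+3) 0) := by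
        intro k hk hiff
        exact no4 Q hQnd hns k (by omega) hiff
      have Q0 := QP m (by omega)
      have Q1 := QP (m+1) (by omega)
      have Q2 := QP (m+2) (by omega)
      have Q3 := QP (m+3) (by omega)
      have E0 := EP m (by omega)
      have E1 := EP (m+1) (by omega)
      have E2 := EP (m+2) (by omega)
      simp only [show m+1+1 = m+2 by omega, show m+1+2 = m+3 by omega,
        show m+1+3 = m+4 by omega, show m+2+1 = m+3 by omega,
        show m+2+2 = m+4 by omega, show m+2+3 = m+5 by omega,
        show m+3+1 = m+4 by omega, show m+3+2 = m+5 by omega,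
        show m+3+3 = m+6 by omega, show m+4+1 = m+5 by omega,
        show m+5+1 = m+6 by omega] at Q0 Q1 Q2 Q3 E0 E1 E2
      simp only [hlt m (by omega) (by omega), hlt (m+1) (by omega) (by omega),
        hlt (m+2) (by omega) (by omega), hge (m+3) (by omega) (by omega),
        hge (m+4) (by omega) (by omega), hge (m+5) (by omega) (by omega)] at E0 E1 E2
      simp only [show m+3+1 = m+4 by omega, show m+4+1 = m+5 by omega,
        show m+5+1 = m+6 by omega] at E0 E1 E2
      omega
end

section
/- Let P be a square-free permutation of length n ≥ 6. For every i with 3 ≤ i ≤ n-3, any extension of P in position i contains a square of length 4. -/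
theorem getD_eraseIdx' (l : List ℤ) (i j : ℕ) (hi : i < l.length) (hj : j + 1 < l.length) :
    (l.eraseIdx i).getD j 0 = if j < i then l.getD j 0 else l.getD (j+1) 0 := by
  have hlen : (l.eraseIdx i).length + 1 = l.length := List.length_eraseIdx_add_one hi
  have hjl : j < (l.eraseIdx i).length := by omega
  rw [List.getD_eq_getElem _ _ hjl]
  split
  · next h =>
    rw [List.getD_eq_getElem _ _ (by omega)]
    simp only [List.eraseIdx_eq_take_drop_succ]
    rw [List.getElem_append_left (by simp; omega)]
    simp [List.getElem_take]
  · next h =>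
    rw [List.getD_eq_getElem _ _ hj]
    simp only [List.eraseIdx_eq_take_drop_succ]
    rw [List.getElem_append_right (by simp; omega)]
    simp only [List.getElem_drop]
    congr 1
    simp
    omega

theorem square4 (x0 x1 x2 x3 : ℤ) (h01 : x0 ≠ x1) (h23 : x2 ≠ x3)
    (h : x0 < x1 ↔ x2 < x3) : IsSquareL [x0, x1, x2, x3] := by
  refine ⟨[x0, x1], [x2, x3], rfl, by simp, by simp, ?_⟩
  intro i j hi hj
  simp at hi hj
  interval_cases i <;> interval_cases j <;> simp_all <;> omega

theorem take4 (l : List ℤ) (j : ℕ) (h : j + 4 ≤ l.length) :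
    (l.drop j).take 4 = [l.getD j 0, l.getD (j+1) 0, l.getD (j+2) 0, l.getD (j+3) 0] := by
  apply List.ext_getElem
  · simp; omega
  · intro k hk1 hk2
    simp only [List.length_take, List.length_drop] at hk1
    rw [List.getElem_take, List.getElem_drop]
    simp at hk2
    interval_cases k <;> (simp; rw [List.getElem?_eq_getElem (by omega)]; rfl)

theorem getD_ne (l : List ℤ) (hnd : l.Nodup) (a b : ℕ) (ha : a < l.length)
    (hb : b < l.length) (hab : a ≠ b) : l.getD a 0 ≠ l.getD b 0 := by
  rw [List.getD_eq_getElem _ _ ha, List.getD_eq_getElem _ _ hb]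
  intro h
  exact hab (List.Nodup.getElem_inj_iff hnd |>.mp h)

theorem noSq4 (l : List ℤ) (hnd : l.Nodup)
    (h : ¬ ∃ f : List ℤ, f <:+: l ∧ f.length = 4 ∧ IsSquareL f)
    (j : ℕ) (hj : j + 4 ≤ l.length) :
    ¬ (l.getD j 0 < l.getD (j+1) 0 ↔ l.getD (j+2) 0 < l.getD (j+3) 0) := by
  intro hiff
  apply h
  refine ⟨(l.drop j).take 4, ?_, ?_, ?_⟩
  · exact ⟨l.take j, l.drop (j+4), by
      rw [← List.drop_drop, List.append_assoc, List.take_append_drop, List.take_append_drop]⟩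
  · simp; omega
  · rw [take4 l j hj]
    exact square4 _ _ _ _ (getD_ne l hnd j (j+1) (by omega) (by omega) (by omega))
      (getD_ne l hnd (j+2) (j+3) (by omega) (by omega) (by omega)) hiff

set_option maxHeartbeats 2000000 in
theorem stmt12 (n : ℕ) (hn : 6 ≤ n) (P : List ℤ) (hnd : P.Nodup)
    (hlen : P.length = n) (hsf : SquareFreeL P) :
    ∀ i : ℕ, 3 ≤ i → i ≤ n - 3 → ∀ Q : List ℤ, ExtL Q P i →
      ∃ f : List ℤ, f <:+: Q ∧ f.length = 4 ∧ IsSquareL f := by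
  intro i hi3 hin Q hext
  obtain ⟨hQnd, hQlen, hiP, hOI⟩ := hext
  by_contra hcon
  obtain ⟨k, rfl⟩ : ∃ k, i = k + 3 := ⟨i - 3, by omega⟩
  have hk6 : k + 6 ≤ n := by omega
  have hQl : Q.length = n + 1 := by rw [hQlen, hlen]
  set q : ℕ → ℤ := fun j => Q.getD j 0 with hq
  set e : ℕ → ℤ := fun j => (Q.eraseIdx (k+3)).getD j 0 with he
  have hElen : (Q.eraseIdx (k+3)).length = n := by
    have := List.length_eraseIdx_add_one (l := Q) (i := k+3) (by omega)
    omega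
  -- Step A: constraints on Q
  have A' : ∀ a b c d : ℕ, b = a+1 → c = a+2 → d = a+3 → a+4 ≤ n+1 →
      ¬ (q a < q b ↔ q c < q d) := by
    rintro a _ _ _ rfl rfl rfl h
    exact noSq4 Q hQnd hcon a (by omega)
  -- Step B: constraints transported from P to Q.eraseIdx
  have B' : ∀ a b c d : ℕ, b = a+1 → c = a+2 → d = a+3 → a+4 ≤ n →
      ¬ (e a < e b ↔ e c < e d) := by
    rintro a _ _ _ rfl rfl rfl h hiff
    apply noSq4 P hnd (fun ⟨f, hf, _, hfs⟩ => hsf ⟨f, hf, hfs⟩) a (by omega)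
    have t1 := hOI.2 a (a+1) (by omega) (by omega)
    have t2 := hOI.2 (a+2) (a+3) (by omega) (by omega)
    exact (t1.symm.trans hiff).trans t2
  -- values of e in terms of q
  have hgd : ∀ j, j + 1 < n + 1 → e j = if j < k + 3 then q j else q (j+1) := by
    intro j hj
    exact getD_eraseIdx' Q (k+3) j (by omega) (by omega)
  have e0 : e k = q k := by rw [hgd k (by omega)]; simp
  have e1 : e (k+1) = q (k+1) := by rw [hgd (k+1) (by omega)]; simp
  have e2 : e (k+2) = q (k+2) := by rw [hgd (k+2) (by omega)]; simp
  have e3 : e (k+3) = q (k+4) := by rw [hgd (k+3) (by omega)]; simp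
  have e4 : e (k+4) = q (k+5) := by rw [hgd (k+4) (by omega)]; simp [show ¬ (k+4 < k+3) by omega]
  have e5 : e (k+5) = q (k+6) := by rw [hgd (k+5) (by omega)]; simp [show ¬ (k+5 < k+3) by omega]
  have A1 := A' k (k+1) (k+2) (k+3) rfl rfl rfl (by omega)
  have A2 := A' (k+1) (k+2) (k+3) (k+4) (by omega) (by omega) (by omega) (by omega)
  have A3 := A' (k+2) (k+3) (k+4) (k+5) (by omega) (by omega) (by omega) (by omega)
  have A4 := A' (k+3) (k+4) (k+5) (k+6) (by omega) (by omega) (by omega) (by omega)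
  have B1 := B' k (k+1) (k+2) (k+3) rfl rfl rfl (by omega)
  have B2 := B' (k+1) (k+2) (k+3) (k+4) (by omega) (by omega) (by omega) (by omega)
  have B3 := B' (k+2) (k+3) (k+4) (k+5) (by omega) (by omega) (by omega) (by omega)
  rw [e0, e1, e2, e3] at B1
  rw [e1, e2, e3, e4] at B2
  rw [e2, e3, e4, e5] at B3
  tauto
end

section
/- The permutation Q = 2,4,3,1,5,11,10,6,9,12,8,7,13,17,15,0,14,16 of length 18 is square-free. Consequently, the permutation P = 2,4,3,1,5,11,10,6,9,12,8,7,13,17,15,14,16 of length 17 is not S-crucial, since Q is an extension of P in position 15 containing no square. -/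
def Q14 : List ℤ := [2, 4, 3, 1, 5, 11, 10, 6, 9, 12, 8, 7, 13, 17, 15, 0, 14, 16]

def P14 : List ℤ := [2, 4, 3, 1, 5, 11, 10, 6, 9, 12, 8, 7, 13, 17, 15, 14, 16]


instance (p q : List ℤ) : Decidable (OrdIso p q) :=
  decidable_of_iff (p.length = q.length ∧
      ∀ i < p.length, ∀ j < p.length,
        (p.getD i 0 < p.getD j 0 ↔ q.getD i 0 < q.getD j 0))
    ⟨fun ⟨h1, h2⟩ => ⟨h1, fun i j hi hj => h2 i hi j hj⟩,
     fun ⟨h1, h2⟩ => ⟨h1, fun i hi j hj => h2 i j hi hj⟩⟩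

lemma containsSquare_iff (p : List ℤ) :
    ContainsSquare p ↔ ∃ s m : ℕ, 2 ≤ m ∧ s + (m + m) ≤ p.length ∧
      OrdIso ((p.drop s).take m) ((p.drop (s + m)).take m) := by
  constructor
  · rintro ⟨f, ⟨u, t, hp⟩, a, b, hfab, ha2, hiso⟩
    refine ⟨u.length, a.length, ha2, ?_, ?_⟩
    · subst hp hfab; simp [List.length_append]
      have := hiso.1; omega
    · have h1 : (p.drop u.length).take a.length = a := by
        have : p = u ++ (a ++ (b ++ t)) := by
          rw [← hp, hfab]; simp [List.append_assoc]
        rw [this, List.drop_left, List.take_left]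
      have h2 : (p.drop (u.length + a.length)).take a.length = b := by
        have : p = (u ++ a) ++ (b ++ t) := by
          rw [← hp, hfab]; simp [List.append_assoc]
        rw [this]
        have hl : u.length + a.length = (u ++ a).length := by
          simp [List.length_append]
        rw [hl, List.drop_left, hiso.1, List.take_left]
      rw [h1, h2]; exact hiso
  · rintro ⟨s, m, h2, hlen, hiso⟩
    refine ⟨(p.drop s).take m ++ (p.drop (s + m)).take m, ?_, _, _, rfl, ?_, hiso⟩
    · have hd : p.drop (s + m) = (p.drop s).drop m := by
        simp [List.drop_drop, Nat.add_comm]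
      rw [hd, ← List.take_add]
      exact (List.take_prefix _ _).isInfix.trans (List.drop_suffix s p).isInfix
    · rw [List.length_take, List.length_drop]; omega

lemma q14_len : Q14.length = 18 := rfl

lemma q14_key : ∀ s, s < 18 → ∀ m, m < 10 → 2 ≤ m → s + (m + m) ≤ 18 →
    ¬ OrdIso ((Q14.drop s).take m) ((Q14.drop (s + m)).take m) := by decide

theorem stmt14 :
    SquareFreeL Q14 ∧ ExtL Q14 P14 15 ∧
    ¬ (∀ i ≤ 17, ∀ Q : List ℤ, ExtL Q P14 i → ContainsSquare Q) := by
  have hsf : SquareFreeL Q14 := by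
    rw [SquareFreeL, containsSquare_iff]
    rintro ⟨s, m, h2, hlen, hiso⟩
    rw [q14_len] at hlen
    exact q14_key s (by omega) m (by omega) h2 hlen hiso
  have hext : ExtL Q14 P14 15 := ⟨by decide, by decide, by decide, by decide⟩
  refine ⟨hsf, hext, fun h => hsf (h 15 (by norm_num) Q14 hext)⟩
end

section
/- For every even m = 2k ≥ 2, any permutation P = p₁…p_{4k-1} constructed by Construction 2 satisfies p₂ > p₃ and p_{4k-3} > p_{4k-2}; hence it is a square-free permutation of odd length 4k-1 with second symbol greater than third and (4k-3)-th symbol greater than (4k-2)-th. -/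
private lemma mem_getD (l : List ℤ) (i : ℕ) (h : i < l.length) : l.getD i 0 ∈ l := by
  rw [List.getD_eq_getElem _ _ h]; exact List.getElem_mem h

private lemma il_getD (U V W : List ℤ) (k : ℕ) (i : ℕ) (hi : i < 4*k - 1) :
    (interleave U V W k).getD i 0 =
      if i % 4 = 0 then U.getD (i/4) 0
      else if i % 4 = 2 then W.getD (i/4) 0
      else V.getD (i/2) 0 := by
  unfold interleave
  rw [List.getD_eq_getElem _ _ (by simpa using hi)]
  rw [List.getElem_map, List.getElem_range]
  rcases (show i % 4 = 0 ∨ i % 4 = 1 ∨ i % 4 = 2 ∨ i % 4 = 3 by omega) with h|h|h|h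
  · rw [if_pos (by omega : (i+1)%4 = 1), if_pos h]
    congr 1; omega
  · rw [if_neg (by omega), if_neg (by omega), if_neg (by omega), if_neg (by omega)]
    congr 1; omega
  · rw [if_neg (by omega), if_pos (by omega : (i+1)%4 = 3), if_neg (by omega), if_pos h]
    congr 1; omega
  · rw [if_neg (by omega), if_neg (by omega), if_neg (by omega), if_neg (by omega)]
    congr 1; omega

private lemma il_desc (k : ℕ) (hk : 1 ≤ k) (U V W : List ℤ)
    (hU : U.length = k) (hV : V.length = 2*k - 1) (hW : W.length = k)
    (hUV : ∀ u ∈ U, ∀ v ∈ V, v < u) (hVW : ∀ v ∈ V, ∀ w ∈ W, w < v)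
    (i : ℕ) (hi : i + 1 < 4*k - 1) :
    ((interleave U V W k).getD (i+1) 0 < (interleave U V W k).getD i 0 ↔ i % 4 < 2) := by
  rw [il_getD U V W k i (by omega), il_getD U V W k (i+1) hi]
  rcases (show i % 4 = 0 ∨ i % 4 = 1 ∨ i % 4 = 2 ∨ i % 4 = 3 by omega) with h|h|h|h
  · rw [if_neg (show ¬(i+1)%4 = 0 by omega), if_neg (show ¬(i+1)%4 = 2 by omega), if_pos h]
    exact iff_of_true (hUV _ (mem_getD U _ (by omega)) _ (mem_getD V _ (by omega))) (by omega)
  · rw [if_neg (show ¬(i+1)%4 = 0 by omega), if_pos (show (i+1)%4 = 2 by omega),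
      if_neg (show ¬i%4 = 0 by omega), if_neg (show ¬i%4 = 2 by omega)]
    exact iff_of_true (hVW _ (mem_getD V _ (by omega)) _ (mem_getD W _ (by omega))) (by omega)
  · rw [if_neg (show ¬(i+1)%4 = 0 by omega), if_neg (show ¬(i+1)%4 = 2 by omega),
      if_neg (show ¬i%4 = 0 by omega), if_pos h]
    exact iff_of_false (not_lt.mpr (le_of_lt
      (hVW _ (mem_getD V _ (by omega)) _ (mem_getD W _ (by omega))))) (by omega)
  · rw [if_pos (show (i+1)%4 = 0 by omega),
      if_neg (show ¬i%4 = 0 by omega), if_neg (show ¬i%4 = 2 by omega)]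
    exact iff_of_false (not_lt.mpr (le_of_lt
      (hUV _ (mem_getD U _ (by omega)) _ (mem_getD V _ (by omega))))) (by omega)

theorem stmt17 (k : ℕ) (hk : 1 ≤ k) (U V W : List ℤ)
    (hU : U.length = k) (hV : V.length = 2*k - 1) (hW : W.length = k)
    (hUn : U.Nodup) (hVn : V.Nodup) (hWn : W.Nodup)
    (hUV : ∀ u ∈ U, ∀ v ∈ V, v < u) (hVW : ∀ v ∈ V, ∀ w ∈ W, w < v)
    (hVsf : SquareFreeL V) :
    SquareFreeL (interleave U V W k) ∧
    (interleave U V W k).length = 4*k - 1 ∧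
    Odd (interleave U V W k).length ∧
    (interleave U V W k).getD 1 0 > (interleave U V W k).getD 2 0 ∧
    (interleave U V W k).getD (4*k - 4) 0 > (interleave U V W k).getD (4*k - 3) 0 := by
  have hlen : (interleave U V W k).length = 4*k - 1 := by
    unfold interleave; simp
  refine ⟨?_, hlen, by rw [hlen, Nat.odd_iff]; omega, ?_, ?_⟩
  · -- square-freeness
    rintro ⟨f, hinf, a, b, hf, ha2, hlab, hiso⟩
    obtain ⟨pre, suf, hP⟩ := hinf
    set P := interleave U V W k with hPdef
    set s := pre.length with hs
    set ℓ := a.length with hl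
    have hfl : f.length = 2*ℓ := by rw [hf, List.length_append]; omega
    have hsl : s + 2*ℓ ≤ 4*k - 1 := by
      have h1 := congrArg List.length hP
      simp only [List.length_append, hlen] at h1
      omega
    have hgf : ∀ j, j < 2*ℓ → f.getD j 0 = P.getD (s+j) 0 := by
      intro j hj
      rw [← hP, List.getD_append _ _ _ _ (show s+j < (pre++f).length by
            rw [List.length_append]; omega),
          List.getD_append_right _ _ _ _ (show pre.length ≤ s+j by omega),
          show s + j - pre.length = j by omega]
    have hga : ∀ i, i < ℓ → a.getD i 0 = P.getD (s+i) 0 := by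
      intro i hi
      rw [← hgf i (by omega), hf, List.getD_append _ _ _ _ (show i < a.length by omega)]
    have hgb : ∀ i, i < ℓ → b.getD i 0 = P.getD (s+ℓ+i) 0 := by
      intro i hi
      rw [show s+ℓ+i = s+(ℓ+i) by omega, ← hgf (ℓ+i) (by omega), hf,
          List.getD_append_right _ _ _ _ (show a.length ≤ ℓ+i by omega),
          show ℓ + i - a.length = i by omega]
    have key : ∀ i j, i < ℓ → j < ℓ →
        (P.getD (s+i) 0 < P.getD (s+j) 0 ↔ P.getD (s+ℓ+i) 0 < P.getD (s+ℓ+j) 0) := by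
      intro i j hi hj
      rw [← hga i hi, ← hga j hj, ← hgb i hi, ← hgb j hj]
      exact hiso i j (by omega) (by omega)
    by_cases h4 : ℓ % 4 = 0
    · -- a square inside V
      set t := s / 2 with ht
      set m := ℓ / 2 with hm
      have hℓ : ℓ = 2*m := by omega
      have htm : t + 2*m ≤ 2*k - 1 := by omega
      have hVP : ∀ n, 2*n+1 < 4*k-1 → V.getD n 0 = P.getD (2*n+1) 0 := by
        intro n hn
        rw [hPdef, il_getD U V W k _ hn, if_neg (by omega), if_neg (by omega)]
        congr 1
        omega
      have hVa : ∀ i, i < m → ((V.drop t).take m).getD i 0 = V.getD (t+i) 0 := by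
        intro i hi
        rw [List.getD_eq_getElem _ _ (by simp [hV]; omega),
            List.getElem_take, List.getElem_drop,
            List.getD_eq_getElem _ _ (by rw [hV]; omega)]
      have hVb : ∀ i, i < m →
          (((V.drop t).drop m).take m).getD i 0 = V.getD (t+(m+i)) 0 := by
        intro i hi
        rw [List.getD_eq_getElem _ _ (by simp [hV]; omega),
            List.getElem_take, List.getElem_drop, List.getElem_drop,
            List.getD_eq_getElem _ _ (by rw [hV]; omega)]
      have hal : ((V.drop t).take m).length = m := by simp [hV]; omega
      have hbl : ((((V.drop t).drop m)).take m).length = m := by simp [hV]; omega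
      apply hVsf
      refine ⟨(V.drop t).take (2*m), ((List.take_prefix _ _).isInfix).trans
        ((List.drop_suffix t V).isInfix), (V.drop t).take m, ((V.drop t).drop m).take m,
        by rw [two_mul, List.take_add], by omega, by rw [hal, hbl], ?_⟩
      intro i j hi hj
      rw [hal] at hi hj
      rw [hVa i hi, hVa j hj, hVb i hi, hVb j hj,
          hVP (t+i) (by omega), hVP (t+j) (by omega),
          hVP (t+(m+i)) (by omega), hVP (t+(m+j)) (by omega)]
      have hkey := key (2*(t+i)+1-s) (2*(t+j)+1-s) (by omega) (by omega)
      rw [show s + (2*(t+i)+1-s) = 2*(t+i)+1 by omega,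
          show s + (2*(t+j)+1-s) = 2*(t+j)+1 by omega,
          show s + ℓ + (2*(t+i)+1-s) = 2*(t+(m+i))+1 by omega,
          show s + ℓ + (2*(t+j)+1-s) = 2*(t+(m+j))+1 by omega] at hkey
      exact hkey
    · -- descent-pattern mismatch
      have hdm : (2 ≤ ℓ ∧ ¬((s%4<2) ↔ ((s+ℓ)%4<2))) ∨
                 (3 ≤ ℓ ∧ ¬(((s+1)%4<2) ↔ ((s+1+ℓ)%4<2))) := by omega
      rcases hdm with ⟨h2, hmm⟩ | ⟨h3, hmm⟩
      · have d1 := il_desc k hk U V W hU hV hW hUV hVW s (by omega)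
        have d2 := il_desc k hk U V W hU hV hW hUV hVW (s+ℓ) (by omega)
        rw [← hPdef] at d1 d2
        have hk2 := key 1 0 (by omega) (by omega)
        rw [show s+(1:ℕ) = s+1 by rfl, show s+(0:ℕ) = s by rfl,
            show s+ℓ+(1:ℕ) = (s+ℓ)+1 by rfl, show s+ℓ+(0:ℕ) = s+ℓ by rfl] at hk2
        rw [d1, d2] at hk2
        exact hmm hk2
      · have d1 := il_desc k hk U V W hU hV hW hUV hVW (s+1) (by omega)
        have d2 := il_desc k hk U V W hU hV hW hUV hVW (s+1+ℓ) (by omega)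
        rw [← hPdef] at d1 d2
        have hk2 := key 2 1 (by omega) (by omega)
        rw [show s+(2:ℕ) = (s+1)+1 by omega, show s+ℓ+(2:ℕ) = (s+1+ℓ)+1 by omega,
            show s+ℓ+(1:ℕ) = s+1+ℓ by omega] at hk2
        rw [d1, d2] at hk2
        exact hmm hk2
  · rw [il_getD U V W k 1 (by omega), il_getD U V W k 2 (by omega),
        if_neg (show ¬(2:ℕ)%4 = 0 by norm_num), if_pos (show (2:ℕ)%4 = 2 by norm_num),
        if_neg (show ¬(1:ℕ)%4 = 0 by norm_num), if_neg (show ¬(1:ℕ)%4 = 2 by norm_num),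
        show (2:ℕ)/4 = 0 by norm_num]
    exact hVW _ (mem_getD V 0 (by omega)) _ (mem_getD W 0 (by omega))
  · rw [il_getD U V W k (4*k-4) (by omega), il_getD U V W k (4*k-3) (by omega),
        if_pos (show (4*k-4)%4 = 0 by omega),
        if_neg (show ¬(4*k-3)%4 = 0 by omega), if_neg (show ¬(4*k-3)%4 = 2 by omega)]
    exact hUV _ (mem_getD U _ (by omega)) _ (mem_getD V _ (by omega))
end
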